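/- arXiv:1307.0045 — 9 statements merged into one kernel-verified Lean document; each statement's English description precedes it below -/
import Mathlib

section
/- If G is not a complete graph, then the second-smallest eigenvalue of the graph Laplacian satisfies λ₂ ≤ min over non-edges (i,j) ∉ E of (d_i d_j^{2r} + d_i^{2r} d_j)/(d_i^r d_j^{2r} + d_i^{2r} d_j^r). -/
open Finset

lemma sum_two_aux {V : Type*} [Fintype V] [DecidableEq V] (f : V → ℝ) (a b : V) (hab : a ≠ b)
    (h : ∀ i, i ≠ a → i ≠ b → f i = 0) : ∑ i, f i = f a + f b := by
  rw [← Finset.sum_subset (Finset.subset_univ ({a, b} : Finset V))]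
  · rw [Finset.sum_pair hab]
  · intro x _ hx
    simp only [Finset.mem_insert, Finset.mem_singleton, not_or] at hx
    exact h x hx.1 hx.2

/-- If the graph is not complete, then `λ₂`, characterized variationally by
`λ₂ ‖u‖_V² ≤ ‖∇u‖_E²` for all `u` orthogonal to constants, satisfies
`λ₂ ≤ (d_i d_j^{2r} + d_i^{2r} d_j)/(d_i^r d_j^{2r} + d_i^{2r} d_j^r)` for every
non-edge `(i,j)`. -/
theorem stmt_2 {V : Type*} [Fintype V] [Nonempty V]
    (ω : V → V → ℝ) (hsym : ∀ i j, ω i j = ω j i) (hnonneg : ∀ i j, 0 ≤ ω i j)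
    (hdiag : ∀ i, ω i i = 0)
    (d : V → ℝ) (hd : ∀ i, d i = ∑ j, ω i j) (hdpos : ∀ i, 0 < d i)
    (r : ℝ) (hr : r ∈ Set.Icc (0 : ℝ) 1)
    (lam2 : ℝ)
    (hvar : ∀ u : V → ℝ, (∑ i, d i ^ r * u i) = 0 →
      lam2 * (∑ i, d i ^ r * u i ^ 2) ≤ (1/2) * ∑ i, ∑ j, ω i j * (u i - u j) ^ 2)
    (hnoncomplete : ∃ a b : V, a ≠ b ∧ ω a b = 0) :
    ∀ a b : V, a ≠ b → ω a b = 0 →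
      lam2 ≤ (d a * d b ^ (2 * r) + d a ^ (2 * r) * d b) /
             (d a ^ r * d b ^ (2 * r) + d a ^ (2 * r) * d b ^ r) := by
  classical
  intro a b hab hωab
  set α := d a ^ r with hα
  set β := d b ^ r with hβ
  have hαpos : 0 < α := Real.rpow_pos_of_pos (hdpos a) r
  have hβpos : 0 < β := Real.rpow_pos_of_pos (hdpos b) r
  set u : V → ℝ := fun i => if i = a then β else if i = b then -α else 0 with hu
  have hua : u a = β := by simp [hu]
  have hub : u b = -α := by simp [hu, hab.symm]
  have huo : ∀ i, i ≠ a → i ≠ b → u i = 0 := by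
    intro i h1 h2; simp [hu, h1, h2]
  have h0 : ∑ i, d i ^ r * u i = 0 := by
    rw [sum_two_aux _ a b hab (fun i h1 h2 => by rw [huo i h1 h2]; ring), hua, hub]
    ring
  have key := hvar u h0
  have h1 : ∑ i, d i ^ r * u i ^ 2 = α * β ^ 2 + β * α ^ 2 := by
    rw [sum_two_aux _ a b hab (fun i h1 h2 => by rw [huo i h1 h2]; ring), hua, hub]
    ring
  have hinner : ∀ i, ∑ j, ω i j * u j = ω i a * β + ω i b * (-α) := by
    intro i
    rw [sum_two_aux _ a b hab (fun j h1 h2 => by rw [huo j h1 h2]; ring), hua, hub]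
  have hC : ∑ i, ∑ j, ω i j * (u i * u j) = 0 := by
    have hrow : ∀ i, ∑ j, ω i j * (u i * u j) = u i * (ω i a * β + ω i b * (-α)) := by
      intro i
      rw [← hinner i, Finset.mul_sum]
      exact Finset.sum_congr rfl fun j _ => by ring
    rw [Finset.sum_congr rfl fun i _ => hrow i,
      sum_two_aux _ a b hab (fun i h1 h2 => by rw [huo i h1 h2]; ring), hua, hub,
      hdiag a, hdiag b, hωab, hsym b a, hωab]
    ring
  have hA : ∑ i, ∑ j, ω i j * u i ^ 2 = d a * β ^ 2 + d b * α ^ 2 := by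
    have hrow : ∀ i, ∑ j, ω i j * u i ^ 2 = d i * u i ^ 2 := by
      intro i; rw [hd i, Finset.sum_mul]
    rw [Finset.sum_congr rfl fun i _ => hrow i,
      sum_two_aux _ a b hab (fun i h1 h2 => by rw [huo i h1 h2]; ring), hua, hub]
    ring
  have hB : ∑ i, ∑ j, ω i j * u j ^ 2 = d a * β ^ 2 + d b * α ^ 2 := by
    rw [Finset.sum_comm, ← hA]
    exact Finset.sum_congr rfl fun j _ => Finset.sum_congr rfl fun i _ => by rw [hsym j i]
  have hE : ∑ i, ∑ j, ω i j * (u i - u j) ^ 2 = 2 * (d a * β ^ 2 + d b * α ^ 2) := by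
    have expand : ∑ i, ∑ j, ω i j * (u i - u j) ^ 2
        = ∑ i, ∑ j, (ω i j * u i ^ 2 + ω i j * u j ^ 2 - 2 * (ω i j * (u i * u j))) :=
      Finset.sum_congr rfl fun i _ => Finset.sum_congr rfl fun j _ => by ring
    have s1 : ∀ i : V, ∑ j, (ω i j * u i ^ 2 + ω i j * u j ^ 2 - 2 * (ω i j * (u i * u j)))
        = (∑ j, ω i j * u i ^ 2) + (∑ j, ω i j * u j ^ 2) - 2 * ∑ j, ω i j * (u i * u j) := by
      intro i
      rw [Finset.sum_sub_distrib, Finset.sum_add_distrib, Finset.mul_sum]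
    rw [expand, Finset.sum_congr rfl fun i _ => s1 i, Finset.sum_sub_distrib,
      Finset.sum_add_distrib, ← Finset.mul_sum, hA, hB, hC]
    ring
  rw [h1, hE] at key
  have hpow : ∀ x : ℝ, 0 < x → x ^ (2 * r) = (x ^ r) ^ 2 := by
    intro x hx
    rw [mul_comm, Real.rpow_mul hx.le, Real.rpow_two]
  rw [hpow (d a) (hdpos a), hpow (d b) (hdpos b)]
  have hden : 0 < α * β ^ 2 + α ^ 2 * β := by positivity
  rw [le_div_iff₀ hden]
  nlinarith [key]
end

section
/- Total variation difference formula via curvatures: for any two vertex sets S, Ŝ ⊂ V, TV_a^q(χ_{Ŝ}) − TV_a^q(χ_S) = ⟨κ_{Ŝ} + κ_S, χ_{Ŝ} − χ_S⟩_V, where κ_S denotes the graph curvature of S. In particular ⟨κ_{Ŝ}, χ_S⟩_V = ⟨κ_S, χ_{Ŝ}⟩_V. -/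
open Finset

/-- The anisotropic graph total variation of `u`. -/
noncomputable def tva {V : Type*} [Fintype V] (ω : V → V → ℝ) (q : ℝ) (u : V → ℝ) : ℝ :=
  (1/2) * ∑ i, ∑ j, ω i j ^ q * |u i - u j|

/-- The indicator function of a vertex set `S`. -/
noncomputable def chi {V : Type*} [DecidableEq V] (S : Finset V) : V → ℝ :=
  fun i => if i ∈ S then 1 else 0

/-- The graph curvature of a vertex set `S`. -/
noncomputable def curv {V : Type*} [Fintype V] [DecidableEq V]
    (ω : V → V → ℝ) (d : V → ℝ) (q r : ℝ) (S : Finset V) : V → ℝ :=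
  fun i => if i ∈ S then d i ^ (-r) * ∑ j ∈ Sᶜ, ω i j ^ q
           else -(d i ^ (-r) * ∑ j ∈ S, ω i j ^ q)

/-- Total variation difference formula: for any vertex sets `S, Ŝ`,
`TV_a^q(χ_Ŝ) - TV_a^q(χ_S) = ⟨κ_Ŝ + κ_S, χ_Ŝ - χ_S⟩_V`, and in particular
`⟨κ_Ŝ, χ_S⟩_V = ⟨κ_S, χ_Ŝ⟩_V`. -/
theorem stmt_10 {V : Type*} [Fintype V] [DecidableEq V]
    (ω : V → V → ℝ) (hsym : ∀ i j, ω i j = ω j i) (hnonneg : ∀ i j, 0 ≤ ω i j)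
    (hdiag : ∀ i, ω i i = 0)
    (d : V → ℝ) (hd : ∀ i, d i = ∑ j, ω i j) (hdpos : ∀ i, 0 < d i)
    (q : ℝ) (hq : q ∈ Set.Icc (1/2 : ℝ) 1)
    (r : ℝ) (hr : r ∈ Set.Icc (0 : ℝ) 1)
    (S T : Finset V) :
    tva ω q (chi T) - tva ω q (chi S)
      = ∑ i, d i ^ r * ((curv ω d q r T i + curv ω d q r S i) * (chi T i - chi S i)) ∧
    (∑ i, d i ^ r * curv ω d q r T i * chi S i)
      = ∑ i, d i ^ r * curv ω d q r S i * chi T i := by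
  have hdr : ∀ i : V, d i ^ r * d i ^ (-r) = 1 := by
    intro i
    rw [← Real.rpow_add (hdpos i)]
    simp
  have fsym : ∀ i j, ω i j ^ q = ω j i ^ q := fun i j => by rw [hsym i j]
  -- L1 : pointwise formula for d^r ⬝ curvature
  have L1 : ∀ (X : Finset V) (i : V),
      d i ^ r * curv ω d q r X i = ∑ j, ω i j ^ q * (chi X i - chi X j) := by
    intro X i
    unfold curv
    by_cases hi : i ∈ X
    · rw [if_pos hi, ← mul_assoc, hdr i, one_mul]
      have h : ∀ j : V, ω i j ^ q * (chi X i - chi X j)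
          = if j ∈ X then 0 else ω i j ^ q := by
        intro j; by_cases hj : j ∈ X <;> simp [chi, hi, hj]
      rw [Finset.sum_congr rfl fun j _ => h j, Finset.sum_ite,
        Finset.sum_const_zero, zero_add]
      congr 1
      ext j; simp
    · rw [if_neg hi, mul_neg, ← mul_assoc, hdr i, one_mul]
      have h : ∀ j : V, ω i j ^ q * (chi X i - chi X j)
          = -(if j ∈ X then ω i j ^ q else 0) := by
        intro j; by_cases hj : j ∈ X <;> simp [chi, hi, hj]
      rw [Finset.sum_congr rfl fun j _ => h j, Finset.sum_neg_distrib]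
      congr 1
      rw [Finset.sum_ite, Finset.sum_const_zero, add_zero]
      congr 1
      ext j; simp
  -- L2 : symmetry of the pairing
  have L2 : ∀ X Y : Finset V,
      (∑ i, ∑ j, ω i j ^ q * (chi X i - chi X j) * chi Y i)
        = ∑ i, ∑ j, ω i j ^ q * (chi Y i - chi Y j) * chi X i := by
    intro X Y
    have hswap : (∑ i, ∑ j, ω i j ^ q * (chi Y j * chi X i - chi X j * chi Y i))
        = ∑ i, ∑ j, ω i j ^ q * (chi Y i * chi X j - chi X i * chi Y j) := by
      rw [Finset.sum_comm]
      exact Finset.sum_congr rfl fun i _ => Finset.sum_congr rfl fun j _ => by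
        rw [fsym i j]
    have hzero : (∑ i, ∑ j, ω i j ^ q * (chi Y j * chi X i - chi X j * chi Y i)) = 0 := by
      have := hswap
      have h2 : (∑ i, ∑ j, ω i j ^ q * (chi Y i * chi X j - chi X i * chi Y j))
          = -∑ i, ∑ j, ω i j ^ q * (chi Y j * chi X i - chi X j * chi Y i) := by
        rw [← Finset.sum_neg_distrib]
        refine Finset.sum_congr rfl fun i _ => ?_
        rw [← Finset.sum_neg_distrib]
        exact Finset.sum_congr rfl fun j _ => by ring
      linarith [hswap, h2]
    have expand : ∀ i j : V,
        ω i j ^ q * (chi X i - chi X j) * chi Y i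
          - ω i j ^ q * (chi Y i - chi Y j) * chi X i
          = ω i j ^ q * (chi Y j * chi X i - chi X j * chi Y i) := by
      intro i j; ring
    have : (∑ i, ∑ j, ω i j ^ q * (chi X i - chi X j) * chi Y i)
        - (∑ i, ∑ j, ω i j ^ q * (chi Y i - chi Y j) * chi X i) = 0 := by
      rw [← Finset.sum_sub_distrib]
      rw [show (∑ i, ((∑ j, ω i j ^ q * (chi X i - chi X j) * chi Y i)
          - ∑ j, ω i j ^ q * (chi Y i - chi Y j) * chi X i))
        = ∑ i, ∑ j, ω i j ^ q * (chi Y j * chi X i - chi X j * chi Y i) from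
        Finset.sum_congr rfl fun i _ => by
          rw [← Finset.sum_sub_distrib]
          exact Finset.sum_congr rfl fun j _ => expand i j]
      exact hzero
    linarith [this]
  -- L3 : tva equals the self pairing
  have L3 : ∀ X : Finset V,
      tva ω q (chi X) = ∑ i, ∑ j, ω i j ^ q * (chi X i - chi X j) * chi X i := by
    intro X
    unfold tva
    have key : ∀ i j : V, |chi X i - chi X j|
        = (chi X i - chi X j) * chi X i + (chi X j - chi X i) * chi X j := by
      intro i j
      by_cases hi : i ∈ X <;> by_cases hj : j ∈ X <;> simp [chi, hi, hj] <;> norm_num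
    have double : (∑ i, ∑ j, ω i j ^ q * ((chi X j - chi X i) * chi X j))
        = ∑ i, ∑ j, ω i j ^ q * ((chi X i - chi X j) * chi X i) := by
      rw [Finset.sum_comm]
      exact Finset.sum_congr rfl fun i _ => Finset.sum_congr rfl fun j _ => by
        rw [fsym i j]
    have split : (∑ i, ∑ j, ω i j ^ q * |chi X i - chi X j|)
        = (∑ i, ∑ j, ω i j ^ q * ((chi X i - chi X j) * chi X i))
          + ∑ i, ∑ j, ω i j ^ q * ((chi X j - chi X i) * chi X j) := by
      rw [← Finset.sum_add_distrib]
      refine Finset.sum_congr rfl fun i _ => ?_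
      rw [← Finset.sum_add_distrib]
      refine Finset.sum_congr rfl fun j _ => ?_
      rw [key i j]; ring
    rw [split, double]
    have : ∀ i j : V, ω i j ^ q * (chi X i - chi X j) * chi X i
        = ω i j ^ q * ((chi X i - chi X j) * chi X i) := fun i j => by ring
    rw [show (∑ i, ∑ j, ω i j ^ q * (chi X i - chi X j) * chi X i)
        = ∑ i, ∑ j, ω i j ^ q * ((chi X i - chi X j) * chi X i) from
      Finset.sum_congr rfl fun i _ => Finset.sum_congr rfl fun j _ => this i j]
    ring
  -- pairing notation
  have pair : ∀ X Y : Finset V,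
      (∑ i, d i ^ r * curv ω d q r X i * chi Y i)
        = ∑ i, ∑ j, ω i j ^ q * (chi X i - chi X j) * chi Y i := by
    intro X Y
    refine Finset.sum_congr rfl fun i _ => ?_
    rw [L1 X i, Finset.sum_mul]
  constructor
  · -- first claim
    have expand : (∑ i, d i ^ r * ((curv ω d q r T i + curv ω d q r S i) * (chi T i - chi S i)))
        = (∑ i, d i ^ r * curv ω d q r T i * chi T i)
          - (∑ i, d i ^ r * curv ω d q r T i * chi S i)
          + (∑ i, d i ^ r * curv ω d q r S i * chi T i)
          - ∑ i, d i ^ r * curv ω d q r S i * chi S i := by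
      rw [← Finset.sum_sub_distrib, ← Finset.sum_add_distrib, ← Finset.sum_sub_distrib]
      exact Finset.sum_congr rfl fun i _ => by ring
    rw [expand, pair T T, pair T S, pair S T, pair S S, L2 T S, L3 T, L3 S]
    ring
  · rw [pair T S, pair S T, L2 T S]
end

section
/- Graph coarea formula: for any vertex function u, TV_a^q(u) = ∫_ℝ TV_a^q(χ_{E(s)}) ds, where E(s) = {i ∈ V : u_i > s} is the superlevel set. Moreover, if u₋ ≤ min_i u_i and max_i u_i ≤ u₊, the integral may be taken over [u₋, u₊]. -/
open Finset MeasureTheory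

lemma abs_ind_eq (a b : ℝ) :
    (fun s : ℝ => |(if s < a then (1:ℝ) else 0) - (if s < b then 1 else 0)|)
      = (Set.Ico (min a b) (max a b)).indicator (fun _ => (1:ℝ)) := by
  funext s
  rcases le_total a b with h | h <;>
    by_cases h1 : s < a <;> by_cases h2 : s < b <;>
    simp_all [Set.indicator_apply, Set.mem_Ico, min_def, max_def] <;>
    first
      | linarith
      | (split_ifs with hh <;> simp_all <;> linarith)

lemma ind_integrable (a b : ℝ) :
    Integrable (fun s : ℝ => |(if s < a then (1:ℝ) else 0) - (if s < b then 1 else 0)|) := by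
  rw [abs_ind_eq]
  apply MeasureTheory.IntegrableOn.integrable_indicator _ measurableSet_Ico
  exact integrableOn_const (by simp [Real.volume_Ico, ENNReal.ofReal_lt_top])

lemma ind_integral (a b : ℝ) :
    (∫ s : ℝ, |(if s < a then (1:ℝ) else 0) - (if s < b then 1 else 0)|) = |a - b| := by
  rw [abs_ind_eq, MeasureTheory.integral_indicator_const _ measurableSet_Ico]
  rw [measureReal_def, Real.volume_Ico, smul_eq_mul, mul_one,
    ENNReal.toReal_ofReal (by simp [min_le_max] : (0:ℝ) ≤ max a b - min a b)]
  rw [abs_sub_comm]; exact max_sub_min_eq_abs a b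

/-- Graph coarea formula: `TV_a^q(u) = ∫_ℝ TV_a^q(χ_{E(s)}) ds` where
`E(s) = {i : u_i > s}`; moreover if `u₋ ≤ u ≤ u₊` pointwise, the integral may be
taken over `[u₋, u₊]`. -/
theorem stmt_12 {V : Type*} [Fintype V]
    (ω : V → V → ℝ) (hsym : ∀ i j, ω i j = ω j i) (hnonneg : ∀ i j, 0 ≤ ω i j)
    (q : ℝ) (hq : q ∈ Set.Icc (1/2 : ℝ) 1)
    (u : V → ℝ) :
    tva ω q u = (∫ s : ℝ, tva ω q (fun i => if s < u i then (1 : ℝ) else 0)) ∧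
    ∀ um up : ℝ, (∀ i, um ≤ u i) → (∀ i, u i ≤ up) →
      tva ω q u
        = ∫ s in Set.Icc um up, tva ω q (fun i => if s < u i then (1 : ℝ) else 0) := by
  have hint : ∀ i j : V, Integrable (fun s : ℝ =>
      ω i j ^ q * |(if s < u i then (1:ℝ) else 0) - (if s < u j then 1 else 0)|) :=
    fun i j => (ind_integrable (u i) (u j)).const_mul _
  have hmain : tva ω q u = ∫ s : ℝ, tva ω q (fun i => if s < u i then (1 : ℝ) else 0) := by
    simp only [tva]
    rw [integral_const_mul]
    congr 1
    rw [MeasureTheory.integral_finset_sum _ (fun i _ => integrable_finset_sum _ (fun j _ => hint i j))]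
    refine Finset.sum_congr rfl fun i _ => ?_
    rw [MeasureTheory.integral_finset_sum _ (fun j _ => hint i j)]
    refine Finset.sum_congr rfl fun j _ => ?_
    rw [integral_const_mul, ind_integral]
  refine ⟨hmain, fun um up hm hp => ?_⟩
  rw [hmain]
  symm
  apply MeasureTheory.setIntegral_eq_integral_of_forall_compl_eq_zero
  intro s hs
  simp only [Set.mem_Icc, not_and_or, not_le] at hs
  rcases hs with hs | hs
  · have : ∀ i, s < u i := fun i => lt_of_lt_of_le hs (hm i)
    simp [tva, this]
  · have : ∀ i, ¬ s < u i := fun i => not_lt.2 (le_trans (hp i) hs.le)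
    simp [tva, this]
end

section
/- Superlevel sets of minimizers of the convexified MCF functional minimize the set functional: for any m > 0 and fixed vertex function g (the signed distance to the interface divided by the time step), the convex problem min{ TV_a^q(u) + ⟨u, g⟩_V : u ∈ V_m } with V_m = {u : −m ≤ u_i ≤ m for all i} has a minimizer, and for every minimizer u and every s ∈ (−m, m), the superlevel set E(s) = {i : u_i > s} minimizes Ŝ ↦ TV_a^q(χ_{Ŝ}) + ⟨χ_{Ŝ}, g⟩_V over all subsets Ŝ ⊂ V. -/
open Finset

lemma stmt13_key (ε x y tx ty ex ey : ℝ) (hε : 0 < ε)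
    (heq : x = y → ex = ey) (h1 : x < y → ex ≤ ey) (h2 : y < x → ey ≤ ex)
    (hgap : x ≠ y → 2 * ε ≤ |x - y|)
    (hT : |tx - ty| ≤ 1) (hE : |ex - ey| ≤ 1) :
    |x + ε * (tx - ex) - (y + ε * (ty - ey))| ≤ |x - y| + ε * (|tx - ty| - |ex - ey|) := by
  have hT1 := le_abs_self (tx - ty)
  have hT2 := neg_abs_le (tx - ty)
  have hE1 := le_abs_self (ex - ey)
  have hE2 := neg_abs_le (ex - ey)
  rcases lt_trichotomy x y with h | h | h
  · have hee : ex ≤ ey := h1 h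
    have hEe : |ex - ey| = ey - ex := by rw [abs_of_nonpos (by linarith)]; ring
    have hxy : |x - y| = y - x := by rw [abs_of_neg (by linarith)]; ring
    have hg := hgap (ne_of_lt h); rw [hxy] at hg
    have hnp : x + ε * (tx - ex) - (y + ε * (ty - ey)) ≤ 0 := by nlinarith
    rw [abs_of_nonpos hnp, hxy, hEe]
    nlinarith [abs_sub_comm tx ty, le_abs_self (ty - tx)]
  · have hee := heq h
    subst h
    rw [hee]
    have : x + ε * (tx - ey) - (x + ε * (ty - ey)) = ε * (tx - ty) := by ring
    rw [this, abs_mul, abs_of_pos hε]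
    simp
  · have hee : ey ≤ ex := h2 h
    have hEe : |ex - ey| = ex - ey := by rw [abs_of_nonneg (by linarith)]
    have hxy : |x - y| = x - y := by rw [abs_of_pos (by linarith)]
    have hg := hgap (ne_of_gt h); rw [hxy] at hg
    have hnn : 0 ≤ x + ε * (tx - ex) - (y + ε * (ty - ey)) := by nlinarith
    rw [abs_of_nonneg hnn, hxy, hEe]
    nlinarith

/-- The convex problem `min { TV_a^q(u) + ⟨u,g⟩_V : -m ≤ u ≤ m }` has a minimizer,
and for every minimizer `u` and every `s ∈ (-m, m)`, the superlevel set
`E(s) = {i : u_i > s}` minimizes `Ŝ ↦ TV_a^q(χ_Ŝ) + ⟨χ_Ŝ, g⟩_V` over all subsets. -/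
theorem stmt_13 {V : Type*} [Fintype V] [DecidableEq V]
    (ω : V → V → ℝ) (hsym : ∀ i j, ω i j = ω j i) (hnonneg : ∀ i j, 0 ≤ ω i j)
    (d : V → ℝ) (hd : ∀ i, d i = ∑ j, ω i j) (hdpos : ∀ i, 0 < d i)
    (q : ℝ) (hq : q ∈ Set.Icc (1/2 : ℝ) 1)
    (r : ℝ) (hr : r ∈ Set.Icc (0 : ℝ) 1)
    (m : ℝ) (hm : 0 < m) (g : V → ℝ) :
    (∃ u : V → ℝ, (∀ i, -m ≤ u i ∧ u i ≤ m) ∧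
      ∀ v : V → ℝ, (∀ i, -m ≤ v i ∧ v i ≤ m) →
        tva ω q u + ∑ i, d i ^ r * u i * g i
          ≤ tva ω q v + ∑ i, d i ^ r * v i * g i) ∧
    (∀ u : V → ℝ, (∀ i, -m ≤ u i ∧ u i ≤ m) →
      (∀ v : V → ℝ, (∀ i, -m ≤ v i ∧ v i ≤ m) →
        tva ω q u + ∑ i, d i ^ r * u i * g i
          ≤ tva ω q v + ∑ i, d i ^ r * v i * g i) →
      ∀ s : ℝ, -m < s → s < m →
        ∀ T : Finset V,
          tva ω q (fun i => if s < u i then (1 : ℝ) else 0) +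
              ∑ i, d i ^ r * (if s < u i then (1 : ℝ) else 0) * g i
            ≤ tva ω q (chi T) + ∑ i, d i ^ r * chi T i * g i) := by
  classical
  constructor
  · -- existence of a minimizer on the compact box
    have hcont : Continuous fun u : V → ℝ => tva ω q u + ∑ i, d i ^ r * u i * g i := by
      apply Continuous.add
      · unfold tva
        apply continuous_const.mul
        apply continuous_finset_sum; intro i _
        apply continuous_finset_sum; intro j _
        exact continuous_const.mul ((continuous_apply i).sub (continuous_apply j)).abs
      · apply continuous_finset_sum; intro i _
        exact (continuous_const.mul (continuous_apply i)).mul continuous_const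
    have hKeq : {u : V → ℝ | ∀ i, -m ≤ u i ∧ u i ≤ m}
        = Set.pi Set.univ (fun _ : V => Set.Icc (-m) m) := by
      ext u; simp only [Set.mem_setOf_eq, Set.mem_pi, Set.mem_univ, Set.mem_Icc, true_implies]
    have hK : IsCompact {u : V → ℝ | ∀ i, -m ≤ u i ∧ u i ≤ m} := by
      rw [hKeq]; exact isCompact_univ_pi fun _ => isCompact_Icc
    have hne : {u : V → ℝ | ∀ i, -m ≤ u i ∧ u i ≤ m}.Nonempty :=
      ⟨fun _ => 0, fun i => ⟨by show -m ≤ (0:ℝ); linarith, by show (0:ℝ) ≤ m; linarith⟩⟩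
    obtain ⟨u, huK, hmin⟩ := hK.exists_isMinOn hne hcont.continuousOn
    exact ⟨u, huK, fun v hv => isMinOn_iff.1 hmin v hv⟩
  · intro u hu hmin s hs1 hs2 T
    set E : Finset V := univ.filter (fun i => s < u i) with hE
    have hrw : ∀ i, (if s < u i then (1 : ℝ) else 0) = chi E i := by
      intro i; simp [chi, hE]
    simp only [hrw]
    -- choose ε > 0 small enough
    set c : ℝ := min (m - s) (s + m) with hc
    set Sε : Finset ℝ :=
      insert c (((univ ×ˢ univ : Finset (V × V)).filter
        (fun p => u p.1 ≠ u p.2)).image (fun p => |u p.1 - u p.2| / 2)) with hSε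
    have hneS : Sε.Nonempty := ⟨c, mem_insert_self _ _⟩
    set ε := Sε.min' hneS with hεdef
    have hεpos : 0 < ε := by
      rw [hεdef, Finset.lt_min'_iff]
      intro b hb
      rw [hSε] at hb
      rcases Finset.mem_insert.1 hb with rfl | hb
      · exact lt_min (by linarith) (by linarith)
      · obtain ⟨p, hp, rfl⟩ := Finset.mem_image.1 hb
        have hne := (Finset.mem_filter.1 hp).2
        have : 0 < |u p.1 - u p.2| := abs_pos.2 (sub_ne_zero.2 hne)
        linarith
    have hεc : ε ≤ c := Finset.min'_le _ _ (mem_insert_self _ _)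
    have hgap : ∀ i j : V, u i ≠ u j → 2 * ε ≤ |u i - u j| := by
      intro i j hij
      have hmem : |u i - u j| / 2 ∈ Sε := by
        rw [hSε]
        apply mem_insert_of_mem
        exact Finset.mem_image.2 ⟨(i, j),
          Finset.mem_filter.2 ⟨Finset.mem_product.2 ⟨mem_univ _, mem_univ _⟩, hij⟩, rfl⟩
      have := Finset.min'_le _ _ hmem
      linarith
    -- the competitor
    set v : V → ℝ := fun i => u i + ε * (chi T i - chi E i) with hv
    have hvbox : ∀ i, -m ≤ v i ∧ v i ≤ m := by
      intro i
      have h1 := (hu i).1; have h2 := (hu i).2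
      have hc1 : ε ≤ m - s := le_trans hεc (min_le_left _ _)
      have hc2 : ε ≤ s + m := le_trans hεc (min_le_right _ _)
      by_cases hiT : i ∈ T <;> by_cases hiE : s < u i <;>
        simp only [hv, chi, hE, mem_filter, mem_univ, true_and, if_pos, if_neg, hiT, hiE,
          if_true, if_false] <;>
        constructor <;> simp <;> linarith
    have hmin' := hmin v hvbox
    -- per-pair estimate
    have h01 : ∀ (S : Finset V) (k l : V), |chi S k - chi S l| ≤ 1 := by
      intro S k l; simp only [chi]; split_ifs <;> norm_num
    have hkey : ∀ i j : V,
        |v i - v j| ≤ |u i - u j| + ε * (|chi T i - chi T j| - |chi E i - chi E j|) := by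
      intro i j
      have heq : u i = u j → chi E i = chi E j := by
        intro h; simp only [chi, hE, mem_filter, mem_univ, true_and, h]
      have h1 : u i < u j → chi E i ≤ chi E j := by
        intro h; simp only [chi, hE, mem_filter, mem_univ, true_and]
        split_ifs with ha hb
        · norm_num
        · exact absurd (ha.trans h) hb
        · norm_num
        · norm_num
      have h2 : u j < u i → chi E j ≤ chi E i := by
        intro h; simp only [chi, hE, mem_filter, mem_univ, true_and]
        split_ifs with ha hb
        · norm_num
        · exact absurd (ha.trans h) hb
        · norm_num
        · norm_num
      exact stmt13_key ε (u i) (u j) (chi T i) (chi T j) (chi E i) (chi E j) hεpos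
        heq h1 h2 (hgap i j) (h01 T i j) (h01 E i j)
    -- summed TV estimate
    have hsum : tva ω q v ≤ tva ω q u + ε * (tva ω q (chi T) - tva ω q (chi E)) := by
      unfold tva
      have hterm : ∀ i j : V, ω i j ^ q * |v i - v j|
          ≤ ω i j ^ q * |u i - u j| + ε * (ω i j ^ q * |chi T i - chi T j|)
            - ε * (ω i j ^ q * |chi E i - chi E j|) := by
        intro i j
        have hw : (0 : ℝ) ≤ ω i j ^ q := Real.rpow_nonneg (hnonneg i j) q
        calc ω i j ^ q * |v i - v j|
            ≤ ω i j ^ q * (|u i - u j| + ε * (|chi T i - chi T j| - |chi E i - chi E j|)) :=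
              mul_le_mul_of_nonneg_left (hkey i j) hw
          _ = ω i j ^ q * |u i - u j| + ε * (ω i j ^ q * |chi T i - chi T j|)
              - ε * (ω i j ^ q * |chi E i - chi E j|) := by ring
      calc (1/2 : ℝ) * ∑ i, ∑ j, ω i j ^ q * |v i - v j|
          ≤ (1/2 : ℝ) * ∑ i, ∑ j, (ω i j ^ q * |u i - u j|
              + ε * (ω i j ^ q * |chi T i - chi T j|)
              - ε * (ω i j ^ q * |chi E i - chi E j|)) := by
            apply mul_le_mul_of_nonneg_left _ (by norm_num)
            exact Finset.sum_le_sum fun i _ => Finset.sum_le_sum fun j _ => hterm i j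
        _ = (1/2 : ℝ) * ∑ i, ∑ j, ω i j ^ q * |u i - u j|
            + ε * ((1/2 : ℝ) * ∑ i, ∑ j, ω i j ^ q * |chi T i - chi T j|
              - (1/2 : ℝ) * ∑ i, ∑ j, ω i j ^ q * |chi E i - chi E j|) := by
            simp only [Finset.sum_add_distrib, Finset.sum_sub_distrib, ← Finset.mul_sum]
            ring
    -- linear part
    have hlin : ∑ i, d i ^ r * v i * g i
        = ∑ i, d i ^ r * u i * g i
          + ε * (∑ i, d i ^ r * chi T i * g i - ∑ i, d i ^ r * chi E i * g i) := by
      simp only [hv]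
      rw [← Finset.sum_sub_distrib, Finset.mul_sum, ← Finset.sum_add_distrib]
      exact Finset.sum_congr rfl fun i _ => by ring
    have hexpand : ε * (tva ω q (chi T) - tva ω q (chi E))
        + ε * (∑ i, d i ^ r * chi T i * g i - ∑ i, d i ^ r * chi E i * g i)
        = ε * ((tva ω q (chi T) + ∑ i, d i ^ r * chi T i * g i)
            - (tva ω q (chi E) + ∑ i, d i ^ r * chi E i * g i)) := by ring
    have hD : 0 ≤ ε * ((tva ω q (chi T) + ∑ i, d i ^ r * chi T i * g i)
        - (tva ω q (chi E) + ∑ i, d i ^ r * chi E i * g i)) := by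
      linarith [hmin', hsum, hlin, hexpand]
    nlinarith [hD, hεpos]
end

section
/- MBO pinning (spectral bound): let ρ be the spectral radius of the graph Laplacian and S ⊂ V. If τ < ρ^{−1} log(1 + (1/2) d₋^{r/2} (vol S)^{−1/2}), then ‖e^{−τΔ}χ_S − χ_S‖_{V,∞} < 1/2, and hence one MBO iteration with time step τ (diffuse by e^{−τΔ} and threshold at 1/2) leaves S unchanged. -/
open Finset

/-- Dirichlet identity consequence: nonnegativity of the quadratic form. -/
lemma dirichlet_nonneg {V : Type*} [Fintype V] (ω : V → V → ℝ)
    (hsym : ∀ i j, ω i j = ω j i) (hnn : ∀ i j, 0 ≤ ω i j) (w : V → ℝ) :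
    0 ≤ ∑ i, w i * ∑ j, ω i j * (w i - w j) := by
  have hA : (∑ i, w i * ∑ j, ω i j * (w i - w j))
      = ∑ i, ∑ j, ω i j * w i * (w i - w j) := by
    refine Finset.sum_congr rfl fun i _ => ?_
    rw [Finset.mul_sum]
    exact Finset.sum_congr rfl fun j _ => by ring
  have h2 : (∑ i, ∑ j, ω i j * w i * (w i - w j))
      = ∑ i, ∑ j, ω j i * w j * (w j - w i) := Finset.sum_comm
  have h3 : (∑ i, ∑ j, ω j i * w j * (w j - w i))
      = ∑ i, ∑ j, ω i j * w j * (w j - w i) := by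
    refine Finset.sum_congr rfl fun i _ => Finset.sum_congr rfl fun j _ => ?_
    rw [hsym]
  have key : 2 * ∑ i, w i * ∑ j, ω i j * (w i - w j)
      = ∑ i, ∑ j, ω i j * (w i - w j) ^ 2 := by
    rw [hA, two_mul]
    nth_rewrite 2 [h2]
    rw [h3, ← Finset.sum_add_distrib]
    refine Finset.sum_congr rfl fun i _ => ?_
    rw [← Finset.sum_add_distrib]
    exact Finset.sum_congr rfl fun j _ => by ring
  have hpos : 0 ≤ ∑ i : V, ∑ j : V, ω i j * (w i - w j) ^ 2 := by
    refine Finset.sum_nonneg fun i _ => Finset.sum_nonneg fun j _ => ?_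
    exact mul_nonneg (hnn i j) (sq_nonneg _)
  linarith

/-- MBO pinning (spectral bound): if `ρ` bounds the graph Laplacian in `V`-norm
and `τ < ρ⁻¹ log(1 + (1/2) d₋^{r/2} (vol S)^{-1/2})`, then the diffused indicator
`u(τ) = e^{-τΔ}χ_S` satisfies `‖u(τ) - χ_S‖_{V,∞} < 1/2`, so thresholding at `1/2`
returns exactly `S`. -/
theorem stmt_14 {V : Type*} [Fintype V] [Nonempty V] [DecidableEq V]
    (ω : V → V → ℝ) (hsym : ∀ i j, ω i j = ω j i) (hnonneg : ∀ i j, 0 ≤ ω i j)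
    (d : V → ℝ) (hd : ∀ i, d i = ∑ j, ω i j) (hdpos : ∀ i, 0 < d i)
    (r : ℝ) (hr : r ∈ Set.Icc (0 : ℝ) 1)
    (ρ : ℝ) (hρpos : 0 < ρ)
    (hρ : ∀ w : V → ℝ,
      ∑ i, d i ^ r * (d i ^ (-r) * ∑ j, ω i j * (w i - w j)) ^ 2
        ≤ ρ ^ 2 * ∑ i, d i ^ r * w i ^ 2)
    (S : Finset V)
    (u : ℝ → V → ℝ) (hu0 : u 0 = chi S)
    (hode : ∀ (t : ℝ) (i : V), HasDerivAt (fun s => u s i)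
      (-(d i ^ (-r) * ∑ j, ω i j * (u t i - u t j))) t)
    (τ : ℝ) (hτ0 : 0 < τ)
    (hτ : τ < ρ⁻¹ * Real.log (1 + (1/2) * (univ.inf' univ_nonempty d) ^ (r/2) *
      (∑ i ∈ S, d i ^ r) ^ (-(1/2 : ℝ)))) :
    (∀ i, |u τ i - chi S i| < 1/2) ∧ (∀ i, (1/2 ≤ u τ i ↔ i ∈ S)) := by
  classical
  set m : ℝ := univ.inf' univ_nonempty d with hm
  have hmpos : 0 < m := by
    obtain ⟨i, _, hi⟩ := Finset.exists_mem_eq_inf' (univ_nonempty (α := V)) d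
    rw [hm, hi]; exact hdpos i
  set volS : ℝ := ∑ i ∈ S, d i ^ r with hvol
  -- S must be nonempty, else hτ contradicts hτ0
  have hSne : S.Nonempty := by
    by_contra h
    rw [Finset.not_nonempty_iff_eq_empty] at h
    rw [hvol] at hτ
    simp [h, Real.zero_rpow (by norm_num : (-(1/2:ℝ)) ≠ 0)] at hτ
    linarith
  have hvolpos : 0 < volS := by
    obtain ⟨i, hi⟩ := hSne
    exact Finset.sum_pos' (fun j _ => (Real.rpow_pos_of_pos (hdpos j) r).le)
      ⟨i, hi, Real.rpow_pos_of_pos (hdpos i) r⟩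
  -- Laplacian value
  set L : ℝ → V → ℝ := fun t i => d i ^ (-r) * ∑ j, ω i j * (u t i - u t j) with hL
  -- V-norm squared
  set N : ℝ → ℝ := fun t => ∑ i, d i ^ r * (u t i) ^ 2 with hNdef
  have hNderiv : ∀ t, HasDerivAt N (∑ i, d i ^ r * ((2:ℕ) * u t i ^ 1 * (-(L t i)))) t := by
    intro t
    apply HasDerivAt.fun_sum
    intro i _
    exact ((hode t i).pow 2).const_mul (d i ^ r)
  have hdrr : ∀ i : V, d i ^ r * d i ^ (-r) = 1 := fun i => by
    rw [← Real.rpow_add (hdpos i), add_neg_cancel, Real.rpow_zero]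
  have hNderiv_nonpos : ∀ t, (∑ i, d i ^ r * ((2:ℕ) * u t i ^ 1 * (-(L t i)))) ≤ 0 := by
    intro t
    have heq : (∑ i, d i ^ r * ((2:ℕ) * u t i ^ 1 * (-(L t i))))
        = -2 * ∑ i, u t i * ∑ j, ω i j * (u t i - u t j) := by
      rw [Finset.mul_sum]
      refine Finset.sum_congr rfl fun i _ => ?_
      have h1 : d i ^ r * ((2:ℕ) * u t i ^ 1 * (-(L t i)))
          = -2 * (u t i * ∑ j, ω i j * (u t i - u t j)) * (d i ^ r * d i ^ (-r)) := by
        simp only [hL]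
        push_cast
        ring
      rw [h1, hdrr i, mul_one]
    rw [heq]
    have := dirichlet_nonneg ω hsym hnonneg (u t)
    linarith
  have hNanti : Antitone N := by
    apply antitone_of_deriv_nonpos
    · exact fun t => (hNderiv t).differentiableAt
    · intro t
      rw [(hNderiv t).deriv]
      exact hNderiv_nonpos t
  have hN0 : N 0 = volS := by
    simp only [hNdef, hu0, chi, hvol]
    have h : ∀ i ∈ univ, d i ^ r * (if i ∈ S then (1:ℝ) else 0) ^ 2
        = if i ∈ S then d i ^ r else 0 := fun i _ => by
      by_cases hi : i ∈ S <;> simp [hi]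
    rw [Finset.sum_congr rfl h, Finset.sum_ite_mem, Finset.univ_inter]
  -- pointwise bound on the Laplacian
  set C : ℝ := ρ * Real.sqrt volS * m ^ (-(r/2)) with hC
  have hCpos : 0 < C :=
    mul_pos (mul_pos hρpos (Real.sqrt_pos.mpr hvolpos)) (Real.rpow_pos_of_pos hmpos _)
  have hC2 : C ^ 2 = ρ ^ 2 * volS * m ^ (-r) := by
    rw [hC]
    rw [mul_pow, mul_pow, Real.sq_sqrt hvolpos.le, ← Real.rpow_natCast (m ^ (-(r/2))) 2,
      ← Real.rpow_mul hmpos.le]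
    norm_num
  have hLbound : ∀ t ∈ Set.Icc (0:ℝ) τ, ∀ i, |L t i| ≤ C := by
    intro t ht i
    have hNle : N t ≤ volS := by
      rw [← hN0]; exact hNanti ht.1
    have hsum := hρ (u t)
    have hterm : d i ^ r * (L t i) ^ 2 ≤ ρ ^ 2 * volS := by
      have h1 : d i ^ r * (L t i) ^ 2 ≤ ∑ k, d k ^ r * (L t k) ^ 2 :=
        Finset.single_le_sum (f := fun k => d k ^ r * (L t k) ^ 2)
          (fun k _ => mul_nonneg (Real.rpow_pos_of_pos (hdpos k) r).le (sq_nonneg _))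
          (Finset.mem_univ i)
      have h2 : (∑ k, d k ^ r * (L t k) ^ 2) ≤ ρ ^ 2 * N t := hsum
      nlinarith [sq_nonneg ρ]
    have hmr : m ^ r ≤ d i ^ r := by
      apply Real.rpow_le_rpow hmpos.le _ hr.1
      exact Finset.inf'_le d (Finset.mem_univ i)
    have hsq : (L t i) ^ 2 ≤ C ^ 2 := by
      have hmrpos : 0 < m ^ r := Real.rpow_pos_of_pos hmpos r
      have h3 : m ^ r * (L t i) ^ 2 ≤ ρ ^ 2 * volS := by
        nlinarith [sq_nonneg (L t i)]
      rw [hC2, Real.rpow_neg hmpos.le, ← div_eq_mul_inv]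
      exact (le_div_iff₀ hmrpos).mpr (by rw [mul_comm]; exact h3)
    calc |L t i| = Real.sqrt ((L t i) ^ 2) := (Real.sqrt_sq_eq_abs _).symm
      _ ≤ Real.sqrt (C ^ 2) := Real.sqrt_le_sqrt hsq
      _ = C := by rw [Real.sqrt_sq hCpos.le]
  -- integrate
  have hdiff : ∀ i, |u τ i - u 0 i| ≤ C * τ := by
    intro i
    have := Convex.norm_image_sub_le_of_norm_hasDerivWithin_le
      (f := fun s => u s i) (f' := fun s => -(L s i)) (s := Set.Icc (0:ℝ) τ)
      (x := (0:ℝ)) (y := τ) (C := C)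
      (fun t _ => (hode t i).hasDerivWithinAt)
      (fun t ht => by rw [Real.norm_eq_abs, abs_neg]; exact hLbound t ht i)
      (convex_Icc 0 τ) (Set.left_mem_Icc.mpr hτ0.le) (Set.right_mem_Icc.mpr hτ0.le)
    simpa [Real.norm_eq_abs, abs_of_pos hτ0] using this
  -- arithmetic
  set x : ℝ := (1/2) * m ^ (r/2) * volS ^ (-(1/2:ℝ)) with hx
  have hxpos : 0 < x :=
    mul_pos (mul_pos (by norm_num) (Real.rpow_pos_of_pos hmpos _))
      (Real.rpow_pos_of_pos hvolpos _)
  have hlogx : Real.log (1 + x) ≤ x := by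
    have := Real.log_le_sub_one_of_pos (show (0:ℝ) < 1 + x by linarith)
    linarith
  have hCx : C * (ρ⁻¹ * x) = 1/2 := by
    rw [hC, hx]
    have h1 : Real.sqrt volS * volS ^ (-(1/2:ℝ)) = 1 := by
      rw [Real.sqrt_eq_rpow, ← Real.rpow_add hvolpos]
      norm_num
    have h2 : m ^ (-(r/2)) * m ^ (r/2) = 1 := by
      rw [← Real.rpow_add hmpos]; norm_num
    have h3 : ρ * ρ⁻¹ = 1 := mul_inv_cancel₀ hρpos.ne'
    calc ρ * Real.sqrt volS * m ^ (-(r/2)) * (ρ⁻¹ * ((1/2) * m ^ (r/2) * volS ^ (-(1/2:ℝ))))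
        = (1/2) * (ρ * ρ⁻¹) * (Real.sqrt volS * volS ^ (-(1/2:ℝ))) * (m ^ (-(r/2)) * m ^ (r/2)) := by ring
      _ = 1/2 := by rw [h1, h2, h3]; ring
  have hmain : ∀ i, |u τ i - chi S i| < 1/2 := by
    intro i
    have h1 : |u τ i - chi S i| ≤ C * τ := by rw [← hu0]; exact hdiff i
    have h2 : C * τ < C * (ρ⁻¹ * x) := by
      apply mul_lt_mul_of_pos_left _ hCpos
      calc τ < ρ⁻¹ * Real.log (1 + x) := hτ
        _ ≤ ρ⁻¹ * x := by
            apply mul_le_mul_of_nonneg_left hlogx (inv_pos.mpr hρpos).le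
    rw [hCx] at h2
    linarith
  refine ⟨hmain, fun i => ?_⟩
  have := hmain i
  constructor
  · intro hle
    by_contra hiS
    simp [chi, hiS] at this
    rw [abs_lt] at this
    linarith [this.2]
  · intro hiS
    simp [chi, hiS] at this
    rw [abs_lt] at this
    linarith [this.1]
end

section
/- MBO pinning (curvature bound): for S ⊂ V, if τ ≤ 1/(2‖Δχ_S‖_{V,∞}), then ‖e^{−τΔ}χ_S − χ_S‖_{V,∞} ≤ 1/2 and τ‖Δχ_S‖_{V,∞} bounds the deviation; more precisely ‖e^{−τΔ}χ_S − χ_S‖_{V,∞} ≤ τ‖Δχ_S‖_{V,∞}. -/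
open Finset

/-- Max principle / contraction for the graph heat semigroup (abstract ODE form):
if `g` solves an ODE whose right-hand side `G` satisfies `|G t i + c * g t i| ≤ c * ‖g t‖`,
then `t ↦ ‖g t‖` does not exceed its initial value for `t ≥ 0`. -/
lemma maxp_aux_stmt_15 {V : Type*} [Fintype V] [Nonempty V]
    (g G : ℝ → V → ℝ) (c : ℝ) (hc : 0 ≤ c)
    (hder : ∀ t i, HasDerivAt (fun s => g s i) (G t i) t)
    (hb : ∀ t i, |G t i + c * g t i| ≤ c * ‖g t‖)
    (t₀ : ℝ) (ht₀ : 0 ≤ t₀) : ‖g t₀‖ ≤ ‖g 0‖ := by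
  have hgc : Continuous fun t => g t := by
    refine continuous_pi fun i => ?_
    exact continuous_iff_continuousAt.mpr fun t => (hder t i).continuousAt
  have hN : Continuous fun t => ‖g t‖ := hgc.norm
  obtain ⟨t₁, ht₁mem, ht₁max⟩ := (isCompact_Icc (a := (0:ℝ)) (b := t₀)).exists_isMaxOn
    ⟨0, Set.left_mem_Icc.mpr ht₀⟩ hN.continuousOn
  set K := ‖g t₁‖ with hKdef
  have hK0 : ‖g t₀‖ ≤ K := ht₁max (Set.right_mem_Icc.mpr ht₀)
  have hKnn : 0 ≤ K := norm_nonneg _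
  have ht₁0 : 0 ≤ t₁ := ht₁mem.1
  set E : ℝ := Real.exp (c * t₁) with hEdef
  have hE1 : 1 ≤ E := by
    rw [hEdef]
    have : (0:ℝ) ≤ c * t₁ := mul_nonneg hc ht₁0
    simpa using Real.one_le_exp this
  have hEpos : 0 < E := lt_of_lt_of_le one_pos hE1
  -- key bound for each coordinate
  have key : ∀ i : V, |g t₁ i| * E ≤ ‖g 0‖ + K * (E - 1) := by
    intro i
    set f : ℝ → ℝ := fun t => Real.exp (c * t) * g t i with hfdef
    have hf' : ∀ t, HasDerivAt f (Real.exp (c * t) * (G t i + c * g t i)) t := by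
      intro t
      have h1 : HasDerivAt (fun s : ℝ => Real.exp (c * s)) (Real.exp (c * t) * c) t := by
        simpa using ((hasDerivAt_id t).const_mul c).exp
      have h2 : HasDerivAt (fun s => Real.exp (c * s) * g s i) (Real.exp (c * t) * c * g t i + Real.exp (c * t) * G t i) t := h1.mul (hder t i)
      convert h2 using 1
      ring
    have hderivf : ∀ t, deriv f t = Real.exp (c * t) * (G t i + c * g t i) :=
      fun t => (hf' t).deriv
    have hfdiff : Differentiable ℝ f := fun t => (hf' t).differentiableAt
    have hboundK : ∀ x ∈ Set.Icc (0:ℝ) t₁, |G x i + c * g x i| ≤ c * K := by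
      intro x hx
      refine (hb x i).trans ?_
      have hxmem : x ∈ Set.Icc (0:ℝ) t₀ := ⟨hx.1, hx.2.trans ht₁mem.2⟩
      exact mul_le_mul_of_nonneg_left (ht₁max hxmem) hc
    -- upper bound
    have hupper : f t₁ ≤ g 0 i + K * (E - 1) := by
      set F : ℝ → ℝ := fun t => g 0 i + K * (Real.exp (c * t) - 1) - f t with hFdef
      have hF' : ∀ t, HasDerivAt F
          (K * (Real.exp (c * t) * c) - Real.exp (c * t) * (G t i + c * g t i)) t := by
        intro t
        have h := (((((hasDerivAt_id t).const_mul c).exp).sub_const 1).const_mul K |>.const_add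
          (g 0 i)).sub (hf' t)
        exact h.congr_deriv (by simp)
      have hmono : MonotoneOn F (Set.Icc (0:ℝ) t₁) := by
        refine monotoneOn_of_deriv_nonneg (convex_Icc _ _) ?_ ?_ ?_
        · exact (Differentiable.continuous (fun t => (hF' t).differentiableAt)).continuousOn
        · exact fun t _ => ((hF' t).differentiableAt).differentiableWithinAt
        · intro x hx
          rw [interior_Icc] at hx
          rw [(hF' x).deriv]
          have hb1 : Real.exp (c * x) * (G x i + c * g x i) ≤ Real.exp (c * x) * (c * K) := by
            refine mul_le_mul_of_nonneg_left ?_ (Real.exp_nonneg _)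
            exact (le_abs_self _).trans (hboundK x ⟨le_of_lt hx.1, le_of_lt hx.2⟩)
          nlinarith [Real.exp_nonneg (c * x)]
      have := hmono (Set.left_mem_Icc.mpr ht₁0) (Set.right_mem_Icc.mpr ht₁0) ht₁0
      have hF0 : F 0 = 0 := by simp [hFdef, hfdef]
      have hFt : F t₁ = g 0 i + K * (E - 1) - f t₁ := by simp [hFdef, hEdef]
      rw [hF0, hFt] at this
      linarith
    -- lower bound
    have hlower : g 0 i - K * (E - 1) ≤ f t₁ := by
      set F : ℝ → ℝ := fun t => f t + K * (Real.exp (c * t) - 1) - g 0 i with hFdef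
      have hF' : ∀ t, HasDerivAt F
          (Real.exp (c * t) * (G t i + c * g t i) + K * (Real.exp (c * t) * c)) t := by
        intro t
        have h := ((hf' t).add ((((hasDerivAt_id t).const_mul c).exp).sub_const 1 |>.const_mul
          K)).sub_const (g 0 i)
        exact h.congr_deriv (by simp)
      have hmono : MonotoneOn F (Set.Icc (0:ℝ) t₁) := by
        refine monotoneOn_of_deriv_nonneg (convex_Icc _ _) ?_ ?_ ?_
        · exact (Differentiable.continuous (fun t => (hF' t).differentiableAt)).continuousOn
        · exact fun t _ => ((hF' t).differentiableAt).differentiableWithinAt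
        · intro x hx
          rw [interior_Icc] at hx
          rw [(hF' x).deriv]
          have hb1 : -(Real.exp (c * x) * (c * K)) ≤ Real.exp (c * x) * (G x i + c * g x i) := by
            rw [← mul_neg]
            refine mul_le_mul_of_nonneg_left ?_ (Real.exp_nonneg _)
            have := (hboundK x ⟨le_of_lt hx.1, le_of_lt hx.2⟩)
            have := neg_abs_le (G x i + c * g x i)
            linarith
          nlinarith [Real.exp_nonneg (c * x)]
      have := hmono (Set.left_mem_Icc.mpr ht₁0) (Set.right_mem_Icc.mpr ht₁0) ht₁0
      have hF0 : F 0 = 0 := by simp [hFdef, hfdef]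
      have hFt : F t₁ = f t₁ + K * (E - 1) - g 0 i := by simp [hFdef, hEdef]
      rw [hF0, hFt] at this
      linarith
    have habs : |f t₁| ≤ |g 0 i| + K * (E - 1) := by
      rw [abs_le]
      constructor
      · have := neg_abs_le (g 0 i); linarith
      · have := le_abs_self (g 0 i); linarith
    have hfix : |f t₁| = E * |g t₁ i| := by
      rw [hfdef]
      simp [abs_mul, abs_of_pos hEpos, hEdef, Real.abs_exp]
    have hg0i : |g 0 i| ≤ ‖g 0‖ := by
      simpa [Real.norm_eq_abs] using norm_le_pi_norm (g 0) i
    rw [hfix] at habs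
    nlinarith
  have hKle : K ≤ ‖g 0‖ := by
    have hKle' : K * E ≤ ‖g 0‖ + K * (E - 1) := by
      have : K ≤ (‖g 0‖ + K * (E - 1)) / E := by
        rw [hKdef]
        refine pi_norm_le_iff_of_nonneg ?_ |>.mpr ?_
        · refine div_nonneg ?_ hEpos.le
          nlinarith [norm_nonneg (g 0)]
        · intro i
          rw [Real.norm_eq_abs, le_div_iff₀ hEpos]
          exact key i
      calc K * E ≤ ((‖g 0‖ + K * (E - 1)) / E) * E := by
            exact mul_le_mul_of_nonneg_right this (le_of_lt hEpos)
        _ = ‖g 0‖ + K * (E - 1) := by field_simp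
    nlinarith
  exact hK0.trans hKle

/-- MBO pinning (curvature bound): the diffused indicator satisfies
`‖e^{-τΔ}χ_S - χ_S‖_{V,∞} ≤ τ ‖Δχ_S‖_{V,∞}`; in particular if
`τ ≤ 1/(2‖Δχ_S‖_{V,∞})` then `‖e^{-τΔ}χ_S - χ_S‖_{V,∞} ≤ 1/2`. -/
theorem stmt_15 {V : Type*} [Fintype V] [Nonempty V] [DecidableEq V]
    (ω : V → V → ℝ) (hsym : ∀ i j, ω i j = ω j i) (hnonneg : ∀ i j, 0 ≤ ω i j)
    (d : V → ℝ) (hd : ∀ i, d i = ∑ j, ω i j) (hdpos : ∀ i, 0 < d i)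
    (r : ℝ) (hr : r ∈ Set.Icc (0 : ℝ) 1)
    (S : Finset V)
    (u : ℝ → V → ℝ) (hu0 : u 0 = chi S)
    (hode : ∀ (t : ℝ) (i : V), HasDerivAt (fun s => u s i)
      (-(d i ^ (-r) * ∑ j, ω i j * (u t i - u t j))) t)
    (τ : ℝ) (hτ0 : 0 ≤ τ) :
    (univ.sup' univ_nonempty fun i => |u τ i - chi S i|)
      ≤ τ * (univ.sup' univ_nonempty fun i =>
          |d i ^ (-r) * ∑ j, ω i j * (chi S i - chi S j)|) ∧
    (τ ≤ 1 / (2 * (univ.sup' univ_nonempty fun i =>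
          |d i ^ (-r) * ∑ j, ω i j * (chi S i - chi S j)|)) →
      (univ.sup' univ_nonempty fun i => |u τ i - chi S i|) ≤ 1/2) := by
  set g : ℝ → V → ℝ := fun t i => d i ^ (-r) * ∑ j, ω i j * (u t i - u t j) with hg
  set G : ℝ → V → ℝ := fun t i => -(d i ^ (-r) * ∑ j, ω i j * (g t i - g t j)) with hG
  set c : ℝ := univ.sup' univ_nonempty (fun i => d i ^ (-r) * d i) with hc
  have hrpow : ∀ i, 0 < d i ^ (-r) := fun i => Real.rpow_pos_of_pos (hdpos i) _
  have hci_le : ∀ i, d i ^ (-r) * d i ≤ c :=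
    fun i => le_sup' (fun i => d i ^ (-r) * d i) (mem_univ i)
  have hc0 : 0 ≤ c := le_trans (le_of_lt (mul_pos (hrpow (Classical.arbitrary V))
    (hdpos _))) (hci_le _)
  have hu' : ∀ t i, HasDerivAt (fun s => u s i) (-(g t i)) t := hode
  have hder : ∀ t i, HasDerivAt (fun s => g s i) (G t i) t := by
    intro t i
    have hsum : HasDerivAt (fun s => ∑ j, ω i j * (u s i - u s j))
        (∑ j, ω i j * (-(g t i) - -(g t j))) t :=
      HasDerivAt.fun_sum fun j _ => ((hu' t i).sub (hu' t j)).const_mul (ω i j)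
    have h := hsum.const_mul (d i ^ (-r))
    refine h.congr_deriv (Eq.symm ?_)
    rw [hG]
    simp only
    rw [neg_mul_eq_mul_neg, ← Finset.sum_neg_distrib]
    exact congrArg _ (Finset.sum_congr rfl fun j _ => by ring)
  have hb : ∀ t i, |G t i + c * g t i| ≤ c * ‖g t‖ := by
    intro t i
    have hsplit : ∑ j, ω i j * (g t i - g t j)
        = d i * g t i - ∑ j, ω i j * g t j := by
      rw [hd i, Finset.sum_mul]
      rw [← Finset.sum_sub_distrib]
      exact Finset.sum_congr rfl fun j _ => by ring
    have hGe : G t i + c * g t i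
        = (c - d i ^ (-r) * d i) * g t i + d i ^ (-r) * ∑ j, ω i j * g t j := by
      rw [hG]; simp only; rw [hsplit]; ring
    have h1 : |g t i| ≤ ‖g t‖ := by
      simpa [Real.norm_eq_abs] using norm_le_pi_norm (g t) i
    have h2 : |∑ j, ω i j * g t j| ≤ d i * ‖g t‖ := by
      calc |∑ j, ω i j * g t j| ≤ ∑ j, |ω i j * g t j| := Finset.abs_sum_le_sum_abs _ _
        _ ≤ ∑ j, ω i j * ‖g t‖ := by
            refine Finset.sum_le_sum fun j _ => ?_
            rw [abs_mul, abs_of_nonneg (hnonneg i j)]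
            refine mul_le_mul_of_nonneg_left ?_ (hnonneg i j)
            simpa [Real.norm_eq_abs] using norm_le_pi_norm (g t) j
        _ = d i * ‖g t‖ := by rw [← Finset.sum_mul, ← hd i]
    have hsub : 0 ≤ c - d i ^ (-r) * d i := sub_nonneg.mpr (hci_le i)
    have hA : |(c - d i ^ (-r) * d i) * g t i| ≤ (c - d i ^ (-r) * d i) * ‖g t‖ := by
      rw [abs_mul (c - d i ^ (-r) * d i) (g t i), abs_of_nonneg hsub]
      exact mul_le_mul_of_nonneg_left h1 hsub
    have hB : |d i ^ (-r) * ∑ j, ω i j * g t j| ≤ d i ^ (-r) * (d i * ‖g t‖) := by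
      rw [abs_mul (d i ^ (-r)) (∑ j, ω i j * g t j), abs_of_pos (hrpow i)]
      exact mul_le_mul_of_nonneg_left h2 (hrpow i).le
    rw [hGe]
    calc |(c - d i ^ (-r) * d i) * g t i + d i ^ (-r) * ∑ j, ω i j * g t j|
        ≤ |(c - d i ^ (-r) * d i) * g t i| + |d i ^ (-r) * ∑ j, ω i j * g t j| := abs_add_le _ _
      _ ≤ (c - d i ^ (-r) * d i) * ‖g t‖ + d i ^ (-r) * (d i * ‖g t‖) := add_le_add hA hB
      _ = c * ‖g t‖ := by ring
  have hmax : ∀ t, 0 ≤ t → ‖g t‖ ≤ ‖g 0‖ := maxp_aux_stmt_15 g G c hc0 hder hb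
  set M : ℝ := univ.sup' univ_nonempty (fun i =>
      |d i ^ (-r) * ∑ j, ω i j * (chi S i - chi S j)|) with hM
  have hg0 : ∀ i, g 0 i = d i ^ (-r) * ∑ j, ω i j * (chi S i - chi S j) := by
    intro i; rw [hg]; simp only; rw [hu0]
  have hM0 : 0 ≤ M := le_trans (abs_nonneg _)
    (le_sup' (fun i => |d i ^ (-r) * ∑ j, ω i j * (chi S i - chi S j)|)
      (mem_univ (Classical.arbitrary V)))
  have hg0M : ‖g 0‖ ≤ M := by
    refine pi_norm_le_iff_of_nonneg hM0 |>.mpr fun i => ?_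
    rw [Real.norm_eq_abs, hg0 i]
    exact le_sup' (fun i => |d i ^ (-r) * ∑ j, ω i j * (chi S i - chi S j)|) (mem_univ i)
  have hkey : ∀ i, |u τ i - chi S i| ≤ M * τ := by
    intro i
    have hb2 : ∀ x ∈ Set.Icc (0:ℝ) τ, ‖-(g x i)‖ ≤ M := by
      intro x hx
      rw [norm_neg, Real.norm_eq_abs]
      calc |g x i| ≤ ‖g x‖ := by simpa [Real.norm_eq_abs] using norm_le_pi_norm (g x) i
        _ ≤ ‖g 0‖ := hmax x hx.1
        _ ≤ M := hg0M
    have hmvt := Convex.norm_image_sub_le_of_norm_hasDerivWithin_le (f := fun s => u s i)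
      (f' := fun x => -(g x i)) (s := Set.Icc 0 τ)
      (fun x _ => (hu' x i).hasDerivWithinAt) hb2 (convex_Icc _ _)
      (Set.left_mem_Icc.mpr hτ0) (Set.right_mem_Icc.mpr hτ0)
    simpa [Real.norm_eq_abs, abs_of_nonneg hτ0, congrFun hu0 i] using hmvt
  have hfirst : (univ.sup' univ_nonempty fun i => |u τ i - chi S i|) ≤ τ * M := by
    refine Finset.sup'_le _ _ fun i _ => ?_
    rw [mul_comm]
    exact hkey i
  refine ⟨hfirst, fun hτle => ?_⟩
  refine hfirst.trans ?_
  rcases eq_or_lt_of_le hM0 with h | h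
  · rw [← h]; norm_num
  · have h2M : (0:ℝ) < 2 * M := by linarith
    have := (le_div_iff₀ h2M).mp hτle
    nlinarith
end

section
/- Trivial MBO dynamics for large τ: on a connected graph, let S ⊂ V with R_S = vol S / vol V ≠ 1/2. If τ > (1/λ₂)·log( (vol S)^{1/2}(vol S^c)^{1/2} / ((vol V)^{1/2}·|R_S − 1/2|·d₋^{r/2}) ), then thresholding e^{−τΔ}χ_S at 1/2 yields χ_V if R_S > 1/2 and yields 0 if R_S < 1/2. -/
set_option maxHeartbeats 1000000


open Finset

lemma mbo_sum_zero {V : Type*} [Fintype V] (ω : V → V → ℝ)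
    (hsym : ∀ i j, ω i j = ω j i) (w : V → ℝ) :
    ∑ i, ∑ j, ω i j * (w i - w j) = 0 := by
  have h : ∑ i, ∑ j, ω i j * (w i - w j) = - ∑ i, ∑ j, ω i j * (w i - w j) := by
    conv_lhs => rw [Finset.sum_comm]
    rw [← Finset.sum_neg_distrib]
    refine Finset.sum_congr rfl fun j _ => ?_
    rw [← Finset.sum_neg_distrib]
    exact Finset.sum_congr rfl fun i _ => by rw [hsym]; ring
  linarith

lemma mbo_sum_sq {V : Type*} [Fintype V] (ω : V → V → ℝ)
    (hsym : ∀ i j, ω i j = ω j i) (w : V → ℝ) :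
    ∑ i, ∑ j, ω i j * (w i - w j) ^ 2
      = 2 * ∑ i, w i * ∑ j, ω i j * (w i - w j) := by
  have hB : ∑ i, ∑ j, ω i j * (w j * (w i - w j))
      = - ∑ i, ∑ j, ω i j * (w i * (w i - w j)) := by
    conv_lhs => rw [Finset.sum_comm]
    rw [← Finset.sum_neg_distrib]
    refine Finset.sum_congr rfl fun j _ => ?_
    rw [← Finset.sum_neg_distrib]
    exact Finset.sum_congr rfl fun i _ => by rw [hsym]; ring
  calc ∑ i, ∑ j, ω i j * (w i - w j) ^ 2
      = ∑ i, ∑ j, (ω i j * (w i * (w i - w j)) - ω i j * (w j * (w i - w j))) := by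
        refine Finset.sum_congr rfl fun i _ => Finset.sum_congr rfl fun j _ => ?_; ring
    _ = (∑ i, ∑ j, ω i j * (w i * (w i - w j)))
        - ∑ i, ∑ j, ω i j * (w j * (w i - w j)) := by
        rw [← Finset.sum_sub_distrib]
        exact Finset.sum_congr rfl fun i _ => Finset.sum_sub_distrib _ _
    _ = 2 * ∑ i, ∑ j, ω i j * (w i * (w i - w j)) := by rw [hB]; ring
    _ = 2 * ∑ i, w i * ∑ j, ω i j * (w i - w j) := by
        congr 1
        refine Finset.sum_congr rfl fun i _ => ?_
        rw [Finset.mul_sum]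
        exact Finset.sum_congr rfl fun j _ => by ring

/-- Trivial MBO dynamics for large `τ`: on a connected graph (spectral gap
`λ₂ > 0`, variational characterization), with `R_S = vol S / vol V ≠ 1/2`, if
`τ > (1/λ₂) log( √(vol S) √(vol Sᶜ) / (√(vol V) |R_S - 1/2| d₋^{r/2}) )`, then
thresholding `e^{-τΔ}χ_S` at `1/2` yields `χ_V` when `R_S > 1/2` and `0` when
`R_S < 1/2`. -/
theorem stmt_16 {V : Type*} [Fintype V] [Nonempty V] [DecidableEq V]
    (ω : V → V → ℝ) (hsym : ∀ i j, ω i j = ω j i) (hnonneg : ∀ i j, 0 ≤ ω i j)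
    (d : V → ℝ) (hd : ∀ i, d i = ∑ j, ω i j) (hdpos : ∀ i, 0 < d i)
    (r : ℝ) (hr : r ∈ Set.Icc (0 : ℝ) 1)
    (lam2 : ℝ) (hlam2pos : 0 < lam2)
    (hvar : ∀ w : V → ℝ, (∑ i, d i ^ r * w i) = 0 →
      lam2 * (∑ i, d i ^ r * w i ^ 2) ≤ (1/2) * ∑ i, ∑ j, ω i j * (w i - w j) ^ 2)
    (S : Finset V) (hS : S.Nonempty) (hSne : S ≠ univ)
    (u : ℝ → V → ℝ) (hu0 : u 0 = chi S)
    (hode : ∀ (t : ℝ) (i : V), HasDerivAt (fun s => u s i)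
      (-(d i ^ (-r) * ∑ j, ω i j * (u t i - u t j))) t)
    (RS : ℝ) (hRS : RS = (∑ i ∈ S, d i ^ r) / (∑ i, d i ^ r))
    (hRSne : RS ≠ 1/2)
    (τ : ℝ)
    (hτ : (1/lam2) * Real.log
        (Real.sqrt (∑ i ∈ S, d i ^ r) * Real.sqrt (∑ i ∈ Sᶜ, d i ^ r) /
          (Real.sqrt (∑ i, d i ^ r) * |RS - 1/2| *
            (univ.inf' univ_nonempty d) ^ (r/2))) < τ) :
    (1/2 < RS → ∀ i, 1/2 ≤ u τ i) ∧ (RS < 1/2 → ∀ i, u τ i < 1/2) := by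
  obtain ⟨hr0, hr1⟩ := hr
  set dm := univ.inf' univ_nonempty d with hdm
  have hdmpos : 0 < dm := by
    rw [hdm]
    exact (Finset.lt_inf'_iff _).2 fun i _ => hdpos i
  have hdr : ∀ i, (0:ℝ) < d i ^ r := fun i => Real.rpow_pos_of_pos (hdpos i) r
  have hmle : ∀ i, dm ^ r ≤ d i ^ r := fun i =>
    Real.rpow_le_rpow hdmpos.le (Finset.inf'_le d (mem_univ i)) hr0
  have hmpos : (0:ℝ) < dm ^ r := Real.rpow_pos_of_pos hdmpos r
  set a := ∑ i ∈ S, d i ^ r with ha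
  set b := ∑ i ∈ Sᶜ, d i ^ r with hb
  set vV := ∑ i, d i ^ r with hvV
  set m := dm ^ r with hm
  have hapos : 0 < a := Finset.sum_pos (fun i _ => hdr i) hS
  have hScne : Sᶜ.Nonempty := by
    rw [← Finset.card_pos, Finset.card_compl]
    have h1 := (Finset.card_lt_iff_ne_univ S).2 hSne
    omega
  have hbpos : 0 < b := Finset.sum_pos (fun i _ => hdr i) hScne
  have hvab : vV = a + b := by
    rw [hvV, ha, hb, add_comm]
    exact (Finset.sum_compl_add_sum S _).symm
  have hvpos : 0 < vV := hvab ▸ add_pos hapos hbpos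
  have hcpos : 0 < |RS - 1/2| := abs_pos.2 (sub_ne_zero.2 hRSne)
  set c := |RS - 1/2| with hc
  obtain ⟨i0, hi0⟩ := hS
  obtain ⟨j0, hj0⟩ := hScne
  have hma : m ≤ a :=
    le_trans (hmle i0) (Finset.single_le_sum (fun i _ => (hdr i).le) hi0)
  have hmb : m ≤ b :=
    le_trans (hmle j0) (Finset.single_le_sum (fun i _ => (hdr i).le) hj0)
  clear_value dm a b vV m c
  -- mean conservation
  set M : ℝ → ℝ := fun t => ∑ i, d i ^ r * u t i with hM
  have hM' : ∀ t, HasDerivAt M 0 t := by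
    intro t
    have h1 : HasDerivAt M (∑ i, d i ^ r *
        (-(d i ^ (-r) * ∑ j, ω i j * (u t i - u t j)))) t :=
      HasDerivAt.fun_sum fun i _ => (hode t i).const_mul _
    have h3 : (∑ i, d i ^ r * (-(d i ^ (-r) * ∑ j, ω i j * (u t i - u t j)))) = 0 := by
      have h2 : ∀ i, d i ^ r * (-(d i ^ (-r) * ∑ j, ω i j * (u t i - u t j)))
          = -∑ j, ω i j * (u t i - u t j) := by
        intro i
        rw [Real.rpow_neg (hdpos i).le]
        have hne := (hdr i).ne'
        field_simp
      rw [Finset.sum_congr rfl fun i _ => h2 i, Finset.sum_neg_distrib,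
        mbo_sum_zero ω hsym (u t), neg_zero]
    rwa [h3] at h1
  have hMconst : ∀ t, M t = M 0 := fun t =>
    is_const_of_deriv_eq_zero (fun x => (hM' x).differentiableAt)
      (fun x => (hM' x).deriv) t 0
  have hM0 : M 0 = a := by
    simp only [hM, hu0, chi, ha, mul_ite, mul_one, mul_zero]
    simp [Finset.sum_ite_mem]
  have hw0 : ∀ t, ∑ i, d i ^ r * (u t i - RS) = 0 := by
    intro t
    have h1 : ∑ i, d i ^ r * (u t i - RS) = M t - RS * vV := by
      simp only [mul_sub, Finset.sum_sub_distrib, hM, hvV]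
      congr 1
      rw [← Finset.sum_mul, mul_comm]
    rw [h1, hMconst t, hM0, hRS]
    field_simp
    ring
  -- energy decay
  set E : ℝ → ℝ := fun t => ∑ i, d i ^ r * (u t i - RS) ^ 2 with hE
  set D : ℝ → ℝ := fun t => ∑ i, d i ^ r * ((2:ℝ) * (u t i - RS) *
      (-(d i ^ (-r) * ∑ j, ω i j * (u t i - u t j)))) with hD
  have hE' : ∀ t, HasDerivAt E (D t) t := by
    intro t
    show HasDerivAt (fun s => ∑ i, d i ^ r * (u s i - RS) ^ 2) (D t) t
    simp only [hD]
    refine HasDerivAt.fun_sum fun i _ => ?_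
    have h := (((hode t i).sub_const RS).fun_pow 2).const_mul (d i ^ r)
    refine h.congr_deriv ?_
    push_cast
    ring
  have hDle : ∀ t, D t ≤ -(2 * lam2) * E t := by
    intro t
    set w : V → ℝ := fun i => u t i - RS with hw
    have hterm : ∀ i, d i ^ r * ((2:ℝ) * (u t i - RS) *
        (-(d i ^ (-r) * ∑ j, ω i j * (u t i - u t j))))
        = -(2 * (w i * ∑ j, ω i j * (w i - w j))) := by
      intro i
      have hS2 : ∑ j, ω i j * (u t i - u t j) = ∑ j, ω i j * (w i - w j) :=
        Finset.sum_congr rfl fun j _ => by simp only [hw]; ring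
      rw [hS2, Real.rpow_neg (hdpos i).le]
      have hne := (hdr i).ne'
      have hwi : w i = u t i - RS := rfl
      rw [← hwi]
      field_simp
    have h2 : D t = -(2 * ∑ i, w i * ∑ j, ω i j * (w i - w j)) := by
      simp only [hD]
      rw [Finset.sum_congr rfl fun i _ => hterm i, Finset.sum_neg_distrib, ← Finset.mul_sum]
    have h3 := hvar w (hw0 t)
    have h4 := mbo_sum_sq ω hsym w
    have hEt : E t = ∑ i, d i ^ r * w i ^ 2 := rfl
    rw [h2, hEt]
    nlinarith [h3, h4]
  have hEnn : ∀ t, 0 ≤ E t := fun t =>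
    Finset.sum_nonneg fun i _ => mul_nonneg (hdr i).le (sq_nonneg _)
  -- Gronwall
  have hg : ∀ s t : ℝ, s ≤ t →
      E t * Real.exp (2 * lam2 * t) ≤ E s * Real.exp (2 * lam2 * s) := by
    set g : ℝ → ℝ := fun t => E t * Real.exp (2 * lam2 * t) with hgdef
    have hg' : ∀ t, HasDerivAt g
        ((D t + 2 * lam2 * E t) * Real.exp (2 * lam2 * t)) t := by
      intro t
      have h0 : HasDerivAt (fun s : ℝ => 2 * lam2 * s) (2 * lam2) t := by
        simpa using (hasDerivAt_id t).const_mul (2 * lam2)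
      have hexp := h0.exp
      have h := (hE' t).fun_mul hexp
      refine h.congr_deriv ?_
      ring
    have hanti : Antitone g := by
      refine antitone_of_deriv_nonpos (fun x => (hg' x).differentiableAt) fun x => ?_
      rw [(hg' x).deriv]
      have h1 := hDle x
      have h2 := Real.exp_pos (2 * lam2 * x)
      nlinarith
    exact fun s t hst => hanti hst
  -- E 0
  have hE0 : E 0 = a * b / vV := by
    have h1 : E 0 = ∑ i, d i ^ r * (chi S i - RS) ^ 2 := by
      simp only [hE, hu0]
    have hA : ∑ i ∈ S, d i ^ r * (chi S i - RS) ^ 2 = a * (1 - RS) ^ 2 := by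
      rw [ha, Finset.sum_mul]
      exact Finset.sum_congr rfl fun i hi => by simp only [chi, if_pos hi]
    have hB : ∑ i ∈ Sᶜ, d i ^ r * (chi S i - RS) ^ 2 = b * RS ^ 2 := by
      rw [hb, Finset.sum_mul]
      refine Finset.sum_congr rfl fun i hi => ?_
      have hni : i ∉ S := Finset.mem_compl.1 hi
      simp only [chi, if_neg hni]
      ring
    rw [h1, ← Finset.sum_compl_add_sum S, hA, hB, hRS, hvab]
    have h0 : a + b ≠ 0 := (add_pos hapos hbpos).ne'
    field_simp
    ring
  -- the quantity X and τ > 0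
  set X := Real.sqrt a * Real.sqrt b / (Real.sqrt vV * c * dm ^ (r/2)) with hX
  have hsm : dm ^ (r/2) = Real.sqrt m := by
    rw [hm, Real.sqrt_eq_rpow, ← Real.rpow_mul hdmpos.le]
    congr 1
    ring
  have hsmpos : (0:ℝ) < dm ^ (r/2) := by
    rw [hsm]; exact Real.sqrt_pos.2 hmpos
  have hdenpos : 0 < Real.sqrt vV * c * dm ^ (r/2) :=
    mul_pos (mul_pos (Real.sqrt_pos.2 hvpos) hcpos) hsmpos
  have hXpos : 0 < X := by
    rw [hX]
    exact div_pos (mul_pos (Real.sqrt_pos.2 hapos) (Real.sqrt_pos.2 hbpos)) hdenpos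
  have key : vV * c ^ 2 * m ≤ a * b := by
    have hc2 : c ^ 2 = (RS - 1/2) ^ 2 := by rw [hc, sq_abs]
    have hab0 : (0:ℝ) < a + b := add_pos hapos hbpos
    have h5 : RS - 1/2 = (a - b) / (2 * (a + b)) := by
      rw [hRS, hvab]
      field_simp
      ring
    have key2 : (a - b) ^ 2 * m ≤ 4 * (a * b * (a + b)) := by
      nlinarith [mul_le_mul_of_nonneg_left hmb (sq_nonneg a),
        mul_le_mul_of_nonneg_left hma (sq_nonneg b),
        mul_pos (mul_pos hapos hbpos) hmpos]
    rw [hc2, h5, hvab, div_pow]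
    rw [show (a + b) * ((a - b) ^ 2 / (2 * (a + b)) ^ 2) * m
        = (a - b) ^ 2 * m / (4 * (a + b)) from by field_simp; ring]
    rw [div_le_iff₀ (by positivity)]
    nlinarith [key2]
  have hX1 : 1 ≤ X := by
    rw [hX, le_div_iff₀ hdenpos, one_mul, hsm]
    have h6 : Real.sqrt vV * c * Real.sqrt m = Real.sqrt (vV * c ^ 2 * m) := by
      rw [Real.sqrt_mul (by positivity : (0:ℝ) ≤ vV * c ^ 2),
        Real.sqrt_mul hvpos.le, Real.sqrt_sq hcpos.le]
    have h7 : Real.sqrt a * Real.sqrt b = Real.sqrt (a * b) :=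
      (Real.sqrt_mul hapos.le b).symm
    rw [h6, h7]
    exact Real.sqrt_le_sqrt key
  have hτ0 : 0 < τ := by
    have h := mul_nonneg (by positivity : (0:ℝ) ≤ 1/lam2) (Real.log_nonneg hX1)
    linarith [hτ]
  have hXsq : X ^ 2 * (c ^ 2 * m) = a * b / vV := by
    rw [hX, hsm, div_pow, mul_pow, mul_pow, mul_pow,
      Real.sq_sqrt hapos.le, Real.sq_sqrt hbpos.le,
      Real.sq_sqrt hvpos.le, Real.sq_sqrt hmpos.le]
    have hne1 := hvpos.ne'
    have hne2 := hcpos.ne'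
    have hne3 := hmpos.ne'
    field_simp
  -- exp bound
  set P := Real.exp (lam2 * τ) with hP
  have hP1 : 0 < P := Real.exp_pos _
  have hPX : X < P := by
    have hlog : Real.log X < lam2 * τ := by
      have h := mul_lt_mul_of_pos_left hτ hlam2pos
      rwa [show lam2 * (1/lam2 * Real.log X) = Real.log X from by field_simp] at h
    calc X = Real.exp (Real.log X) := (Real.exp_log hXpos).symm
      _ < P := by rw [hP]; exact Real.exp_lt_exp.2 hlog
  have hdec : E τ * (P * P) ≤ a * b / vV := by
    have h := hg 0 τ hτ0.le
    rw [mul_zero, Real.exp_zero, mul_one, hE0] at h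
    have hPP : Real.exp (2 * lam2 * τ) = P * P := by
      rw [hP, ← Real.exp_add]
      congr 1
      ring
    rwa [hPP] at h
  have hmain : ∀ i, (u τ i - RS) ^ 2 < c ^ 2 := by
    intro i
    have h8 : m * (u τ i - RS) ^ 2 ≤ E τ := by
      calc m * (u τ i - RS) ^ 2
          ≤ d i ^ r * (u τ i - RS) ^ 2 :=
            mul_le_mul_of_nonneg_right (hmle i) (sq_nonneg _)
        _ ≤ ∑ j, d j ^ r * (u τ j - RS) ^ 2 :=
            Finset.single_le_sum (f := fun j => d j ^ r * (u τ j - RS) ^ 2)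
              (fun j _ => mul_nonneg (hdr j).le (sq_nonneg _)) (mem_univ i)
        _ = E τ := rfl
    have h9 : X ^ 2 < P ^ 2 := by nlinarith [hPX, hXpos]
    have h10 : E τ * (P * P) < P ^ 2 * (c ^ 2 * m) := by
      calc E τ * (P * P) ≤ a * b / vV := hdec
        _ = X ^ 2 * (c ^ 2 * m) := hXsq.symm
        _ < P ^ 2 * (c ^ 2 * m) :=
            mul_lt_mul_of_pos_right h9 (mul_pos (pow_pos hcpos 2) hmpos)
    have h11 : m * (u τ i - RS) ^ 2 * (P * P) < P ^ 2 * (c ^ 2 * m) :=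
      lt_of_le_of_lt (mul_le_mul_of_nonneg_right h8 (by positivity)) h10
    nlinarith [h11, mul_pos hmpos (mul_pos hP1 hP1)]
  constructor
  · intro hgt i
    have h := hmain i
    have hcv : c = RS - 1/2 := by
      rw [hc, abs_of_pos (by linarith)]
    rw [hcv] at h
    by_contra hcon
    push_neg at hcon
    nlinarith [h]
  · intro hlt i
    have h := hmain i
    have hcv : c = 1/2 - RS := by
      rw [hc, abs_of_neg (by linarith : RS - 1/2 < 0)]
      ring
    rw [hcv] at h
    by_contra hcon
    push_neg at hcon
    nlinarith [h]
end

section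
/- The MBO Lyapunov functional J(u) = ⟨1−u, e^{−τΔ}u⟩_V is strictly concave on ℝ^V and strictly decreases along non-stationary MBO iterates: if u_{k+1} = χ_{{e^{−τΔ}u_k ≥ 1/2}} and u_{k+1} ≠ u_k, then J(u_{k+1}) < J(u_k). Consequently, the graph MBO algorithm, starting from any binary initial condition, reaches a stationary state in finitely many iterations. -/
open Finset

/-- The MBO Lyapunov functional `J(u) = ⟨1-u, e^{-τΔ}u⟩_V`, for the self-adjoint,
positive-definite, mass-preserving heat semigroup `K = e^{-τΔ}`, is strictly
concave, strictly decreases along non-stationary MBO iterates, and consequently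
the MBO iteration starting from any binary state is stationary after finitely
many steps. -/
theorem stmt_18 {V : Type*} [Fintype V]
    (d : V → ℝ) (hdpos : ∀ i, 0 < d i) (r : ℝ) (hr : r ∈ Set.Icc (0 : ℝ) 1)
    (τ : ℝ) (hτ : 0 < τ)
    (K : (V → ℝ) →ₗ[ℝ] (V → ℝ))
    (hsa : ∀ u v : V → ℝ, ∑ i, d i ^ r * (K u) i * v i = ∑ i, d i ^ r * u i * (K v) i)
    (hpd : ∀ v : V → ℝ, v ≠ 0 → 0 < ∑ i, d i ^ r * (K v) i * v i)
    (hK1 : K (fun _ => (1 : ℝ)) = fun _ => (1 : ℝ)) :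
    StrictConcaveOn ℝ Set.univ
      (fun u : V → ℝ => ∑ i, d i ^ r * (1 - u i) * (K u) i) ∧
    (∀ u : V → ℝ, (∀ i, u i = 0 ∨ u i = 1) →
      (fun i => if (1/2 : ℝ) ≤ K u i then (1 : ℝ) else 0) ≠ u →
      (∑ i, d i ^ r * (1 - (if (1/2 : ℝ) ≤ K u i then (1 : ℝ) else 0)) *
          (K (fun i => if (1/2 : ℝ) ≤ K u i then (1 : ℝ) else 0)) i)
        < ∑ i, d i ^ r * (1 - u i) * (K u) i) ∧
    (∀ useq : ℕ → V → ℝ, (∀ i, useq 0 i = 0 ∨ useq 0 i = 1) →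
      (∀ k, useq (k+1) = fun i => if (1/2 : ℝ) ≤ K (useq k) i then (1 : ℝ) else 0) →
      ∃ N, ∀ k, N ≤ k → useq k = useq N) := by
  have hwpos : ∀ i, (0:ℝ) < d i ^ r := fun i => Real.rpow_pos_of_pos (hdpos i) r
  have hQpos : ∀ z : V → ℝ, z ≠ 0 → 0 < ∑ i, d i ^ r * z i * K z i := by
    intro z hz
    have h := hpd z hz
    have heq : ∑ i, d i ^ r * K z i * z i = ∑ i, d i ^ r * z i * K z i :=
      Finset.sum_congr rfl fun i _ => by ring
    linarith
  have hsum1 : ∀ z : V → ℝ, ∑ i, d i ^ r * 1 * K z i = ∑ i, d i ^ r * z i := by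
    intro z
    have h := hsa (fun _ => (1:ℝ)) z
    rw [hK1] at h
    simpa using h.symm
  have key : ∀ u z : V → ℝ,
      ∑ i, d i ^ r * (1 - (u + z) i) * K (u + z) i
        = ∑ i, d i ^ r * (1 - u i) * K u i
          + (∑ i, d i ^ r * z i * (1 - 2 * K u i))
          - ∑ i, d i ^ r * z i * K z i := by
    intro u z
    have hKadd : K (u + z) = K u + K z := map_add K u z
    have h2 := hsa u z
    have h1 := hsum1 z
    calc ∑ i, d i ^ r * (1 - (u + z) i) * K (u + z) i
        = ∑ i, (d i ^ r * (1 - u i) * K u i + d i ^ r * 1 * K z i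
            - d i ^ r * u i * K z i - d i ^ r * K u i * z i
            - d i ^ r * z i * K z i) :=
          Finset.sum_congr rfl fun i _ => by
            rw [hKadd]; simp only [Pi.add_apply]; ring
      _ = ∑ i, d i ^ r * (1 - u i) * K u i + (∑ i, d i ^ r * 1 * K z i)
            - (∑ i, d i ^ r * u i * K z i) - (∑ i, d i ^ r * K u i * z i)
            - ∑ i, d i ^ r * z i * K z i := by
          simp only [Finset.sum_add_distrib, Finset.sum_sub_distrib]
      _ = ∑ i, d i ^ r * (1 - u i) * K u i
          + (∑ i, d i ^ r * z i * (1 - 2 * K u i))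
          - ∑ i, d i ^ r * z i * K z i := by
          have h3 : ∑ i, d i ^ r * z i * (1 - 2 * K u i)
              = ∑ i, d i ^ r * z i - ∑ i, d i ^ r * K u i * z i
                - ∑ i, d i ^ r * K u i * z i := by
            rw [← Finset.sum_sub_distrib, ← Finset.sum_sub_distrib]
            exact Finset.sum_congr rfl fun i _ => by ring
          rw [h3, h1, ← h2]
          ring
  have part1 : StrictConcaveOn ℝ Set.univ
      (fun u : V → ℝ => ∑ i, d i ^ r * (1 - u i) * (K u) i) := by
    refine ⟨convex_univ, ?_⟩
    intro x _ y _ hxy a b ha hb hab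
    have hzne : x - y ≠ 0 := sub_ne_zero.mpr hxy
    have hQz := hQpos _ hzne
    have hx : x = (a • x + b • y) + b • (x - y) := by
      funext i
      simp only [Pi.add_apply, Pi.smul_apply, Pi.sub_apply, smul_eq_mul]
      linear_combination (-(x i)) * hab
    have hy : y = (a • x + b • y) + (-a) • (x - y) := by
      funext i
      simp only [Pi.add_apply, Pi.smul_apply, Pi.sub_apply, smul_eq_mul]
      linear_combination (-(y i)) * hab
    have h1 := key (a • x + b • y) (b • (x - y))
    have h2 := key (a • x + b • y) ((-a) • (x - y))
    rw [← hx] at h1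
    rw [← hy] at h2
    have hL : ∀ (c : ℝ), ∑ i, d i ^ r * (c • (x - y)) i * (1 - 2 * K (a • x + b • y) i)
        = c * ∑ i, d i ^ r * (x - y) i * (1 - 2 * K (a • x + b • y) i) := by
      intro c
      rw [Finset.mul_sum]
      exact Finset.sum_congr rfl fun i _ => by
        simp only [Pi.smul_apply, smul_eq_mul]; ring
    have hQs : ∀ (c : ℝ), ∑ i, d i ^ r * (c • (x - y)) i * K (c • (x - y)) i
        = c^2 * ∑ i, d i ^ r * (x - y) i * K (x - y) i := by
      intro c
      rw [map_smul, Finset.mul_sum]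
      exact Finset.sum_congr rfl fun i _ => by
        simp only [Pi.smul_apply, smul_eq_mul]; ring
    rw [hL b, hQs b] at h1
    rw [hL (-a), hQs (-a)] at h2
    show a * (∑ i, d i ^ r * (1 - x i) * K x i)
        + b * (∑ i, d i ^ r * (1 - y i) * K y i)
        < ∑ i, d i ^ r * (1 - (a • x + b • y) i) * K (a • x + b • y) i
    have hcomb : a * (∑ i, d i ^ r * (1 - x i) * K x i)
        + b * (∑ i, d i ^ r * (1 - y i) * K y i)
        = (∑ i, d i ^ r * (1 - (a • x + b • y) i) * K (a • x + b • y) i)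
          - a * b * (∑ i, d i ^ r * (x - y) i * K (x - y) i) := by
      linear_combination a * h1 + b * h2
        + ((∑ i, d i ^ r * (1 - (a • x + b • y) i) * K (a • x + b • y) i)
            - a * b * (∑ i, d i ^ r * (x - y) i * K (x - y) i)) * hab
    have hpos : 0 < a * b * (∑ i, d i ^ r * (x - y) i * K (x - y) i) :=
      mul_pos (mul_pos ha hb) hQz
    linarith
  have part2 : ∀ u v : V → ℝ, (∀ i, u i = 0 ∨ u i = 1) →
      (∀ i, v i = if (1/2 : ℝ) ≤ K u i then (1 : ℝ) else 0) →
      v ≠ u →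
      ∑ i, d i ^ r * (1 - v i) * K v i < ∑ i, d i ^ r * (1 - u i) * K u i := by
    intro u v hu hvdef hne
    have hvu : u + (v - u) = v := by abel
    have h := key u (v - u)
    rw [hvu] at h
    have hzne : v - u ≠ 0 := sub_ne_zero.mpr hne
    have hQz := hQpos _ hzne
    have hlin : ∑ i, d i ^ r * (v - u) i * (1 - 2 * K u i) ≤ 0 := by
      apply Finset.sum_nonpos
      intro i _
      have hwi := (hwpos i).le
      by_cases hc : (1/2 : ℝ) ≤ K u i
      · have hvi : v i = 1 := by rw [hvdef i, if_pos hc]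
        have hz1 : 0 ≤ (v - u) i := by
          rcases hu i with h0 | h0 <;> simp [Pi.sub_apply, hvi, h0]
        have hneg : 1 - 2 * K u i ≤ 0 := by linarith
        exact mul_nonpos_of_nonneg_of_nonpos (mul_nonneg hwi hz1) hneg
      · have hvi : v i = 0 := by rw [hvdef i, if_neg hc]
        have hz1 : (v - u) i ≤ 0 := by
          rcases hu i with h0 | h0 <;> simp [Pi.sub_apply, hvi, h0]
        have hnn : 0 ≤ 1 - 2 * K u i := by push_neg at hc; linarith
        have h4 : d i ^ r * (v - u) i ≤ 0 := mul_nonpos_of_nonneg_of_nonpos hwi hz1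
        exact mul_nonpos_of_nonpos_of_nonneg h4 hnn
    linarith
  refine ⟨part1, fun u hu hne => part2 u _ hu (fun i => rfl) hne, ?_⟩
  intro useq h0 hstep
  have hbin : ∀ k i, useq k i = 0 ∨ useq k i = 1 := by
    intro k
    induction k with
    | zero => exact h0
    | succ k ih =>
      intro i
      rw [hstep k]
      dsimp only
      split <;> simp
  have hfin : Set.Finite {f : V → ℝ | ∀ i, f i = 0 ∨ f i = 1} := by
    have hsub : {f : V → ℝ | ∀ i, f i = 0 ∨ f i = 1}
        ⊆ Set.pi Set.univ (fun _ : V => ({0, 1} : Set ℝ)) := by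
      intro f hf i _
      rcases hf i with h | h <;> simp [h]
    exact (Set.Finite.pi fun i => (Set.finite_singleton (1:ℝ)).insert 0).subset hsub
  have hex : ∃ N, useq (N + 1) = useq N := by
    by_contra hcon
    push_neg at hcon
    have hdec : ∀ k, ∑ i, d i ^ r * (1 - useq (k+1) i) * K (useq (k+1)) i
        < ∑ i, d i ^ r * (1 - useq k i) * K (useq k) i := by
      intro k
      exact part2 (useq k) (useq (k+1)) (hbin k)
        (fun i => by rw [hstep k]) (hcon k)
    have hanti : StrictAnti (fun k => ∑ i, d i ^ r * (1 - useq k i) * K (useq k) i) :=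
      strictAnti_nat_of_succ_lt hdec
    have hinj : Function.Injective useq := by
      intro a b hab
      apply hanti.injective
      show (∑ i, d i ^ r * (1 - useq a i) * K (useq a) i)
          = ∑ i, d i ^ r * (1 - useq b i) * K (useq b) i
      rw [hab]
    exact (Set.infinite_of_injective_forall_mem
      (s := {f : V → ℝ | ∀ i, f i = 0 ∨ f i = 1}) hinj (fun k => hbin k)) hfin
  obtain ⟨N, hN⟩ := hex
  refine ⟨N, fun k hk => ?_⟩
  induction k, hk using Nat.le_induction with
  | base => rfl
  | succ k hk ih =>
    rw [hstep k, ih, ← hstep N, hN]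
end

section
/- Invariant region for the graph Allen-Cahn equation: for the flow u̇_i = −(Δu)_i − (1/ε) d_i^{−r} W′(u_i) with W(u) = (u+1)²(u−1)², the set S = {u : ‖u‖_V² ≤ (17/4) n d₊^r} is positively invariant, t ↦ ‖u(t)‖_V² is strictly decreasing whenever u(t) ∉ S, and every trajectory enters S in finite time. -/
open Finset

lemma auxQ19 {V : Type*} [Fintype V] (ω : V → V → ℝ)
    (hsym : ∀ i j, ω i j = ω j i) (hnonneg : ∀ i j, 0 ≤ ω i j) (v : V → ℝ) :
    0 ≤ ∑ i, v i * ∑ j, ω i j * (v i - v j) := by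
  have h1 : ∑ i, v i * ∑ j, ω i j * (v i - v j)
      = ∑ i, ∑ j, ω i j * (v i * (v i - v j)) := by
    refine Finset.sum_congr rfl fun i _ => ?_
    rw [Finset.mul_sum]
    exact Finset.sum_congr rfl fun j _ => by ring
  have h2 : ∑ i, ∑ j, ω i j * (v i * (v i - v j))
      = ∑ i, ∑ j, ω i j * (v j * (v j - v i)) := by
    rw [Finset.sum_comm]
    exact Finset.sum_congr rfl fun i _ => Finset.sum_congr rfl fun j _ => by rw [hsym]
  have h3 : (∑ i, v i * ∑ j, ω i j * (v i - v j)) * 2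
      = ∑ i, ∑ j, ω i j * (v i - v j) ^ 2 := by
    calc (∑ i, v i * ∑ j, ω i j * (v i - v j)) * 2
        = (∑ i, ∑ j, ω i j * (v i * (v i - v j)))
          + ∑ i, ∑ j, ω i j * (v j * (v j - v i)) := by rw [h1, ← h2]; ring
      _ = ∑ i, ∑ j, ω i j * (v i - v j) ^ 2 := by
          rw [← Finset.sum_add_distrib]
          refine Finset.sum_congr rfl fun i _ => ?_
          rw [← Finset.sum_add_distrib]
          exact Finset.sum_congr rfl fun j _ => by ring
  have h4 : 0 ≤ ∑ i, ∑ j, ω i j * (v i - v j) ^ 2 :=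
    Finset.sum_nonneg fun i _ => Finset.sum_nonneg fun j _ =>
      mul_nonneg (hnonneg i j) (sq_nonneg _)
  rw [← h3] at h4
  linarith

lemma aux219 {V : Type*} [Fintype V] [Nonempty V] (dr : V → ℝ) (Dr : ℝ)
    (hdr : ∀ i, 0 < dr i) (hDr : ∀ i, dr i ≤ Dr) (v : V → ℝ)
    (h : 17/4 * (Fintype.card V : ℝ) * Dr < ∑ i, dr i * v i ^ 2) :
    221 * (Fintype.card V : ℝ) / 16 ≤ ∑ i, v i ^ 2 * (v i ^ 2 - 1) := by
  have hn : (1 : ℝ) ≤ (Fintype.card V : ℝ) := by exact_mod_cast Fintype.card_pos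
  have hDrpos : 0 < Dr := lt_of_lt_of_le (hdr (Classical.arbitrary V)) (hDr _)
  set n : ℝ := (Fintype.card V : ℝ) with hdefn
  set S := ∑ i, v i ^ 2 with hS
  have hSle : ∑ i, dr i * v i ^ 2 ≤ Dr * S := by
    rw [hS, Finset.mul_sum]
    exact Finset.sum_le_sum fun i _ => mul_le_mul_of_nonneg_right (hDr i) (sq_nonneg _)
  have hS17 : 17/4 * n < S := by
    by_contra hcon
    push_neg at hcon
    have h1 : Dr * S ≤ 17/4 * n * Dr := by nlinarith
    have h2 := lt_of_lt_of_le h hSle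
    linarith
  have hCS : S ^ 2 ≤ n * ∑ i, (v i ^ 2) ^ 2 := by
    have := sq_sum_le_card_mul_sum_sq (s := (univ : Finset V)) (f := fun i => v i ^ 2)
    simpa [hdefn] using this
  have hsum : ∑ i, v i ^ 2 * (v i ^ 2 - 1) = (∑ i, (v i ^ 2) ^ 2) - S := by
    rw [hS, ← Finset.sum_sub_distrib]
    exact Finset.sum_congr rfl fun i _ => by ring
  rw [hsum]
  nlinarith [mul_pos (show (0:ℝ) < S - 17/4*n by linarith)
    (show (0:ℝ) < S + 13/4*n by nlinarith), hCS, hn]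


lemma invariant19 (E : ℝ → ℝ) (hEcont : Continuous E) (c : ℝ)
    (hder : ∀ x, c < E x → deriv E x < 0)
    {t₀ t : ℝ} (hle : t₀ ≤ t) (h0 : E t₀ ≤ c) : E t ≤ c := by
  by_contra hcon
  push_neg at hcon
  have hKne : t₀ ∈ Set.Icc t₀ t ∩ E ⁻¹' Set.Iic c := ⟨⟨le_refl _, hle⟩, h0⟩
  have hKbdd : BddAbove (Set.Icc t₀ t ∩ E ⁻¹' Set.Iic c) := ⟨t, fun x hx => hx.1.2⟩
  have hKclosed : IsClosed (Set.Icc t₀ t ∩ E ⁻¹' Set.Iic c) :=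
    isClosed_Icc.inter (isClosed_le hEcont continuous_const)
  obtain ⟨s, hsdef⟩ : ∃ s, s = sSup (Set.Icc t₀ t ∩ E ⁻¹' Set.Iic c) := ⟨_, rfl⟩
  have hsmem : s ∈ Set.Icc t₀ t ∩ E ⁻¹' Set.Iic c := by
    rw [hsdef]; exact hKclosed.csSup_mem ⟨t₀, hKne⟩ hKbdd
  have hs0 : t₀ ≤ s := hsmem.1.1
  have hst : s ≤ t := hsmem.1.2
  have hsc : E s ≤ c := hsmem.2
  have hslt : s < t := lt_of_le_of_ne hst (fun h => by rw [h] at hsc; linarith)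
  have hanti : StrictAntiOn E (Set.Icc s t) := by
    apply strictAntiOn_of_deriv_neg (convex_Icc s t) hEcont.continuousOn
    intro x hx
    rw [interior_Icc] at hx
    have hx1 : c < E x := by
      by_contra h'
      push_neg at h'
      have hxK : x ∈ Set.Icc t₀ t ∩ E ⁻¹' Set.Iic c := ⟨⟨le_trans hs0 hx.1.le, hx.2.le⟩, h'⟩
      have hle2 : x ≤ s := by rw [hsdef]; exact le_csSup hKbdd hxK
      exact absurd hle2 (not_le.2 hx.1)
    exact hder x hx1
  have := hanti (Set.left_mem_Icc.2 hst) (Set.right_mem_Icc.2 hst) hslt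
  linarith

/-- Invariant region for the graph Allen–Cahn equation
`u̇_i = -(Δu)_i - (1/ε) d_i^{-r} W'(u_i)` with `W'(u) = 4u(u²-1)`:
the set `S = {u : ‖u‖_V² ≤ (17/4) n d₊^r}` is positively invariant,
`t ↦ ‖u(t)‖_V²` is decreasing whenever `u(t) ∉ S`, and every trajectory enters
`S` in finite time. -/
theorem stmt_19 {V : Type*} [Fintype V] [Nonempty V]
    (ω : V → V → ℝ) (hsym : ∀ i j, ω i j = ω j i) (hnonneg : ∀ i j, 0 ≤ ω i j)
    (d : V → ℝ) (hd : ∀ i, d i = ∑ j, ω i j) (hdpos : ∀ i, 0 < d i)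
    (r : ℝ) (hr : r ∈ Set.Icc (0 : ℝ) 1)
    (ε : ℝ) (hε : 0 < ε)
    (u : ℝ → V → ℝ)
    (hode : ∀ (t : ℝ) (i : V), HasDerivAt (fun s => u s i)
      (-(d i ^ (-r) * ∑ j, ω i j * (u t i - u t j))
        - (1/ε) * d i ^ (-r) * (4 * u t i * ((u t i) ^ 2 - 1))) t) :
    (∀ t : ℝ,
      (17/4) * (Fintype.card V : ℝ) * (univ.sup' univ_nonempty d) ^ r
          < ∑ i, d i ^ r * (u t i) ^ 2 →
      ∀ D : ℝ, HasDerivAt (fun s => ∑ i, d i ^ r * (u s i) ^ 2) D t → D < 0) ∧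
    (∀ t₀ t : ℝ, t₀ ≤ t →
      ∑ i, d i ^ r * (u t₀ i) ^ 2
        ≤ (17/4) * (Fintype.card V : ℝ) * (univ.sup' univ_nonempty d) ^ r →
      ∑ i, d i ^ r * (u t i) ^ 2
        ≤ (17/4) * (Fintype.card V : ℝ) * (univ.sup' univ_nonempty d) ^ r) ∧
    (∃ T : ℝ, 0 ≤ T ∧
      ∑ i, d i ^ r * (u T i) ^ 2
        ≤ (17/4) * (Fintype.card V : ℝ) * (univ.sup' univ_nonempty d) ^ r) := by
  classical
  have hn : (1 : ℝ) ≤ (Fintype.card V : ℝ) := by exact_mod_cast Fintype.card_pos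
  set n : ℝ := (Fintype.card V : ℝ) with hdefn
  set dmax : ℝ := univ.sup' univ_nonempty d with hdmax
  set c : ℝ := 17/4 * n * dmax ^ r with hc
  set E : ℝ → ℝ := fun s => ∑ i, d i ^ r * (u s i) ^ 2 with hEdef
  set D : ℝ → ℝ := fun t => ∑ i, (-2 * (u t i * ∑ j, ω i j * (u t i - u t j))
    - 8/ε * ((u t i) ^ 2 * ((u t i) ^ 2 - 1))) with hD
  set δ : ℝ := 221 * n / (2 * ε) with hδdef
  have hδpos : 0 < δ := by
    rw [hδdef]
    apply div_pos (by linarith) (by linarith)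
  have hE : ∀ t, HasDerivAt E (D t) t := by
    intro t
    apply HasDerivAt.fun_sum
    intro i _
    have h1 : d i ^ r * d i ^ (-r) = 1 := by
      rw [← Real.rpow_add (hdpos i)]; simp
    have h2 := ((hode t i).fun_pow 2).const_mul (d i ^ r)
    convert h2 using 1
    · rfl
    simp only [pow_one, Nat.cast_ofNat]
    linear_combination (2 * (u t i * ∑ j, ω i j * (u t i - u t j))
      + 8/ε * (u t i ^ 2 * (u t i ^ 2 - 1))) * h1
  have hkey : ∀ t, c < E t → D t ≤ -δ := by
    intro t ht
    have hQ := auxQ19 ω hsym hnonneg (u t)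
    have h2 : 221 * n / 16 ≤ ∑ i, (u t i) ^ 2 * ((u t i) ^ 2 - 1) :=
      aux219 (fun i => d i ^ r) (dmax ^ r)
        (fun i => Real.rpow_pos_of_pos (hdpos i) r)
        (fun i => Real.rpow_le_rpow (hdpos i).le (Finset.le_sup' d (mem_univ i)) hr.1)
        (u t) ht
    have hDt : D t = -2 * (∑ i, u t i * ∑ j, ω i j * (u t i - u t j))
        - 8/ε * ∑ i, (u t i) ^ 2 * ((u t i) ^ 2 - 1) := by
      rw [hD]
      simp only
      rw [Finset.mul_sum, Finset.mul_sum, ← Finset.sum_sub_distrib]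
    have h3 : 8/ε * (221 * n / 16) ≤ 8/ε * ∑ i, (u t i) ^ 2 * ((u t i) ^ 2 - 1) :=
      mul_le_mul_of_nonneg_left h2 (by positivity)
    have h4 : 8/ε * (221 * n / 16) = δ := by rw [hδdef]; ring
    rw [hDt]
    linarith
  have hEcont : Continuous E := by
    have : Differentiable ℝ E := fun x => (hE x).differentiableAt
    exact this.continuous
  refine ⟨?_, ?_, ?_⟩
  · intro t ht Dv hDv
    have h1 : D t = Dv := (hE t).unique hDv
    have h2 := hkey t ht
    linarith
  · intro t₀ t hle h0
    refine invariant19 E hEcont c ?_ hle h0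
    intro x hx
    rw [(hE x).deriv]
    linarith [hkey x hx]
  · by_contra hcon
    push_neg at hcon
    have hE0 : c < E 0 := hcon 0 le_rfl
    set M : ℝ := (E 0 - c) / δ + 1 with hM
    have hMpos : 0 < M := by
      rw [hM]
      have : 0 < (E 0 - c) / δ := div_pos (by linarith) hδpos
      linarith
    set g : ℝ → ℝ := fun x => E x + δ * x with hg
    have hgd : ∀ x, HasDerivAt g (D x + δ) x := by
      intro x
      have h1 : HasDerivAt (fun y : ℝ => δ * y) (δ * 1) x :=
        (hasDerivAt_id x).const_mul δ
      simpa [mul_one] using (hE x).fun_add h1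
    have hganti : AntitoneOn g (Set.Icc 0 M) := by
      apply antitoneOn_of_deriv_nonpos (convex_Icc 0 M)
      · exact (hEcont.add (continuous_const.mul continuous_id)).continuousOn
      · exact fun x _ => ((hgd x).differentiableAt).differentiableWithinAt
      · intro x hx
        rw [interior_Icc] at hx
        rw [(hgd x).deriv]
        have := hkey x (hcon x hx.1.le)
        linarith
    have h5 := hganti (Set.left_mem_Icc.2 hMpos.le) (Set.right_mem_Icc.2 hMpos.le) hMpos.le
    have h6 : δ * M = E 0 - c + δ := by
      rw [hM]
      field_simp
    have h7 : g M = E M + δ * M := rfl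
    have h8 : g 0 = E 0 := by simp [hg]
    have h9 := hcon M hMpos.le
    rw [h7, h8, h6] at h5
    linarith
end
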